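/- arXiv:2602.19879 — 6 statements merged into one kernel-verified Lean document; each statement's English description precedes it below -/
import Mathlib

section
/- For any merge plan M on R, any terminal set Y ⊆ R used for contraction, and any nonempty X ⊆ R, one has value(M/Y, X) ≤ value(M, X), where M/Y is the merge plan on R/Y whose partition at each time t arises from that of M by combining all parts intersecting Y. Consequently, for a graph G and terminal sets X, Y ⊆ R, drop_{G/Y}(X) ≤ drop_G(X). -/
/-- A merge plan on a terminal set `R`: a family of partitions of `R`
(given as setoids, one for each time `t : ℝ`) such that two distinct
terminals `x, y` lie in different parts of the partition at time `t`
if and only if `0 ≤ t ≤ mergeTime x y`. -/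
structure MergePlan (R : Type*) where
  rel : ℝ → Setoid R
  mergeTime : R → R → ℝ
  mergeTime_self : ∀ x : R, mergeTime x x = 0
  mergeTime_nonneg : ∀ x y : R, x ≠ y → 0 ≤ mergeTime x y
  rel_iff : ∀ (t : ℝ) (x y : R), x ≠ y →
    (¬ (rel t).r x y ↔ 0 ≤ t ∧ t ≤ mergeTime x y)

/-- The local value of a merge plan for a terminal set `X`:
`∫_0^∞ (|{parts meeting X}| - 1) dt`. -/
noncomputable def MergePlan.localValue {R : Type*} (M : MergePlan R) (X : Set R) : ℝ :=
  ∫ t in Set.Ioi (0 : ℝ),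
    ((Set.ncard (Quotient.mk (M.rel t) '' X) : ℝ) - 1)

/-- The value of a merge plan: `∫_0^∞ (|S^t| - 1) dt`. -/
noncomputable def MergePlan.value {R : Type*} (M : MergePlan R) : ℝ :=
  M.localValue Set.univ
/-- The minimum cost of a spanning tree of the complete graph on `R`
with respect to the edge costs `u`. -/
noncomputable def mstCost {R : Type*} (u : Sym2 R → ℝ) : ℝ :=
  sInf {w : ℝ | ∃ T : Finset (Sym2 R), (∀ e ∈ T, ¬ e.IsDiag) ∧
    (SimpleGraph.fromEdgeSet (↑T : Set (Sym2 R))).Connected ∧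
    T.card + 1 = Nat.card R ∧ w = ∑ e ∈ T, u e}
/-- The setoid on `R` identifying all elements of `X` (and nothing else). -/
def contractSetoid {R : Type*} (X : Set R) : Setoid R where
  r a b := a = b ∨ (a ∈ X ∧ b ∈ X)
  iseqv := ⟨fun _ => Or.inl rfl,
    fun h => h.elim (fun e => Or.inl e.symm) (fun h' => Or.inr ⟨h'.2, h'.1⟩),
    fun h1 h2 => by
      rcases h1 with rfl | ⟨ha, hb⟩
      · exact h2
      · rcases h2 with rfl | ⟨_, hc⟩
        · exact Or.inr ⟨ha, hb⟩
        · exact Or.inr ⟨ha, hc⟩⟩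

/-- Edge costs on the quotient of `R` by a setoid `sd`: the minimum of `d`
over all pairs of representatives. -/
noncomputable def quotCost {R : Type*} (d : Sym2 R → ℝ) (sd : Setoid R) :
    Sym2 (Quotient sd) → ℝ :=
  fun e => sInf {v : ℝ | ∃ a b : R,
    s(Quotient.mk sd a, Quotient.mk sd b) = e ∧ v = d s(a, b)}

/-- `drop(X) = TMST - TMST_{/X}` for the terminal metric `d`. -/
noncomputable def dropCost {R : Type*} (d : Sym2 R → ℝ) (X : Set R) : ℝ :=
  mstCost d - mstCost (quotCost d (contractSetoid X))

open Set MeasureTheory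


section KernelCount
variable {α : Type*} {β : Type*} {γ : Type*}

lemma ncard_image_le_of_ker (S : Set α) (hS : S.Finite) (f : α → β) (g : α → γ)
    (h : ∀ a ∈ S, ∀ b ∈ S, f a = f b → g a = g b) : (g '' S).ncard ≤ (f '' S).ncard := by
  classical
  rcases S.eq_empty_or_nonempty with rfl | ⟨a0, ha0⟩
  · simp
  set F : γ → β := fun y => if h' : ∃ a, a ∈ S ∧ g a = y then f h'.choose else f a0 with hF
  apply Set.ncard_le_ncard_of_injOn F ?_ ?_ (hS.image f)
  · rintro y ⟨a, ha, rfl⟩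
    have hex : ∃ a', a' ∈ S ∧ g a' = g a := ⟨a, ha, rfl⟩
    simp only [hF, dif_pos hex]
    exact ⟨hex.choose, hex.choose_spec.1, rfl⟩
  · rintro y1 ⟨a1, ha1, rfl⟩ y2 ⟨a2, ha2, rfl⟩ heq
    have hex1 : ∃ a', a' ∈ S ∧ g a' = g a1 := ⟨a1, ha1, rfl⟩
    have hex2 : ∃ a', a' ∈ S ∧ g a' = g a2 := ⟨a2, ha2, rfl⟩
    simp only [hF, dif_pos hex1, dif_pos hex2] at heq
    rw [← hex1.choose_spec.2, ← hex2.choose_spec.2]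
    exact h _ hex1.choose_spec.1 _ hex2.choose_spec.1 heq

lemma ncard_image_eq_of_ker (S : Set α) (hS : S.Finite) (f : α → β) (g : α → γ)
    (h : ∀ a ∈ S, ∀ b ∈ S, (f a = f b ↔ g a = g b)) : (f '' S).ncard = (g '' S).ncard :=
  le_antisymm (ncard_image_le_of_ker S hS g f fun a ha b hb hab => (h a ha b hb).2 hab)
    (ncard_image_le_of_ker S hS f g fun a ha b hb hab => (h a ha b hb).1 hab)

end KernelCount

lemma integrableOn_Ioi_of_antitoneOn {f : ℝ → ℝ} {T C : ℝ} (hT : 0 ≤ T)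
    (hanti : AntitoneOn f (Set.Ici 0)) (h0 : ∀ t, T < t → f t = 0)
    (hC : ∀ t, 0 < t → |f t| ≤ C) : IntegrableOn f (Set.Ioi (0:ℝ)) := by
  set g : ℝ → ℝ := fun t => f (max t 0) with hg
  have hganti : Antitone g := fun t1 t2 h =>
    hanti (Set.mem_Ici.2 (le_max_right _ _)) (Set.mem_Ici.2 (le_max_right _ _)) (max_le_max h le_rfl)
  have hmeas : Measurable g := hganti.measurable
  have heq : Set.EqOn g f (Set.Ioi 0) := fun t ht => by
    simp only [hg]; rw [max_eq_left (le_of_lt ht)]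
  have h1 : IntegrableOn g (Set.Ioc 0 T) := by
    apply Measure.integrableOn_of_bounded (M := C) measure_Ioc_lt_top.ne
      hmeas.aestronglyMeasurable
    filter_upwards [ae_restrict_mem measurableSet_Ioc] with t ht
    rw [Real.norm_eq_abs, heq ht.1]
    exact hC t ht.1
  have h2 : IntegrableOn g (Set.Ioi T) := by
    apply (integrableOn_zero (ε' := ℝ) (μ := volume)).congr_fun ?_ measurableSet_Ioi
    intro t ht
    have ht0 : (0:ℝ) < t := lt_of_le_of_lt hT ht
    simp only [hg]
    rw [max_eq_left ht0.le, h0 t ht]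
  have h3 : IntegrableOn g (Set.Ioi 0) := by
    have := h1.union h2
    rwa [Set.Ioc_union_Ioi_eq_Ioi hT] at this
  exact h3.congr_fun heq measurableSet_Ioi
noncomputable def mpF {R : Type*} (M : MergePlan R) (X : Set R) (t : ℝ) : ℝ :=
  ((Quotient.mk (M.rel t) '' X).ncard : ℝ) - 1

lemma MergePlan.localValue_eq {R : Type*} (M : MergePlan R) (X : Set R) :
    M.localValue X = ∫ t in Set.Ioi (0:ℝ), mpF M X t := rfl

lemma MergePlan.rel_mono {R : Type*} (M : MergePlan R) {t1 t2 : ℝ} (h0 : 0 ≤ t1) (h12 : t1 ≤ t2)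
    {a b : R} (h : (M.rel t1).r a b) : (M.rel t2).r a b := by
  by_cases hab : a = b
  · subst hab; exact (M.rel t2).refl a
  · by_contra hc
    obtain ⟨h2a, h2b⟩ := (M.rel_iff t2 a b hab).1 hc
    exact ((M.rel_iff t1 a b hab).2 ⟨h0, h12.trans h2b⟩) h

lemma mpF_antitoneOn {R : Type*} [Finite R] (M : MergePlan R) (X : Set R) :
    AntitoneOn (mpF M X) (Set.Ici 0) := by
  intro t1 ht1 t2 _ h12
  have hle := ncard_image_le_of_ker X X.toFinite
    (Quotient.mk (M.rel t1)) (Quotient.mk (M.rel t2))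
    (fun a _ b _ hab => Quotient.sound (M.rel_mono ht1 h12 (Quotient.exact hab)))
  exact sub_le_sub_right (Nat.cast_le.2 hle) 1

lemma mpF_vanish {R : Type*} [Finite R] (M : MergePlan R) (X : Set R) (hX : X.Nonempty) :
    ∃ T, 0 ≤ T ∧ ∀ t, T < t → mpF M X t = 0 := by
  obtain ⟨T, hT⟩ := (Set.finite_range (fun p : R × R => M.mergeTime p.1 p.2)).bddAbove
  refine ⟨max T 0, le_max_right _ _, fun t ht => ?_⟩
  have hrel : ∀ a b : R, (M.rel t).r a b := by
    intro a b
    by_cases hab : a = b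
    · subst hab; exact (M.rel t).refl a
    by_contra hc
    obtain ⟨h1, h2⟩ := (M.rel_iff t a b hab).1 hc
    have hmem : M.mergeTime a b ≤ T := hT ⟨(a, b), rfl⟩
    have : t ≤ max T 0 := le_trans h2 (le_trans hmem (le_max_left _ _))
    exact absurd ht (not_lt.2 this)
  obtain ⟨x0, hx0⟩ := hX
  have himg : Quotient.mk (M.rel t) '' X = {Quotient.mk (M.rel t) x0} := by
    apply subset_antisymm
    · rintro _ ⟨a, _, rfl⟩
      exact Set.mem_singleton_iff.2 (Quotient.sound (hrel a x0))
    · rintro _ rfl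
      exact ⟨x0, hx0, rfl⟩
  simp [mpF, himg]

lemma mpF_abs_le {R : Type*} [Finite R] (M : MergePlan R) (X : Set R) (hX : X.Nonempty) (t : ℝ) :
    |mpF M X t| ≤ (X.ncard : ℝ) := by
  have h1 : 1 ≤ (Quotient.mk (M.rel t) '' X).ncard := by
    rw [Nat.one_le_iff_ne_zero, ← Nat.pos_iff_ne_zero]
    exact (Set.ncard_pos (X.toFinite.image _)).2 (hX.image _)
  have h2 : (Quotient.mk (M.rel t) '' X).ncard ≤ X.ncard := Set.ncard_image_le X.toFinite
  rw [abs_le]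
  constructor
  · have : (0:ℝ) ≤ (X.ncard : ℝ) := Nat.cast_nonneg _
    have h1' : (1:ℝ) ≤ ((Quotient.mk (M.rel t) '' X).ncard : ℝ) := by exact_mod_cast h1
    unfold mpF; linarith
  · have h2' : ((Quotient.mk (M.rel t) '' X).ncard : ℝ) ≤ (X.ncard : ℝ) := by exact_mod_cast h2
    unfold mpF; linarith

lemma mpF_integrableOn {R : Type*} [Finite R] (M : MergePlan R) (X : Set R) (hX : X.Nonempty) :
    IntegrableOn (mpF M X) (Set.Ioi (0:ℝ)) := by
  obtain ⟨T, hT0, hT⟩ := mpF_vanish M X hX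
  exact integrableOn_Ioi_of_antitoneOn hT0 (mpF_antitoneOn M X) hT
    (fun t _ => mpF_abs_le M X hX t)

theorem part_one {R : Type*} [Finite R] (M : MergePlan R) (Y : Set R)
    (M' : MergePlan (Quotient (contractSetoid Y)))
    (hM' : ∀ t : ℝ, 0 ≤ t → ∀ a b : R,
      ((M'.rel t).r (Quotient.mk (contractSetoid Y) a) (Quotient.mk (contractSetoid Y) b) ↔
        ((M.rel t).r a b ∨
          ((∃ y ∈ Y, (M.rel t).r a y) ∧ (∃ y ∈ Y, (M.rel t).r y b)))))
    (X : Set R) (hX : X.Nonempty) :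
    M'.localValue (Quotient.mk (contractSetoid Y) '' X) ≤ M.localValue X := by
  have hXq : (Quotient.mk (contractSetoid Y) '' X).Nonempty := hX.image _
  rw [MergePlan.localValue_eq, MergePlan.localValue_eq]
  apply setIntegral_mono_on (mpF_integrableOn M' _ hXq) (mpF_integrableOn M X hX)
    measurableSet_Ioi
  intro t ht
  have ht' : (0:ℝ) ≤ t := (le_of_lt ht)
  unfold mpF
  rw [← Set.image_comp]
  have hle := ncard_image_le_of_ker X X.toFinite (Quotient.mk (M.rel t))
    ((Quotient.mk (M'.rel t)) ∘ (Quotient.mk (contractSetoid Y)))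
    (fun a _ b _ hab => Quotient.sound ((hM' t ht' a b).2 (Or.inl (Quotient.exact hab))))
  exact sub_le_sub_right (Nat.cast_le.2 hle) 1
/-! ### Graph infrastructure for part (ii) -/

def cliqueOn {R : Type*} (Y : Set R) : SimpleGraph R where
  Adj a b := a ≠ b ∧ a ∈ Y ∧ b ∈ Y
  symm := ⟨fun a b ⟨h1, h2, h3⟩ => ⟨h1.symm, h3, h2⟩⟩
  loopless := ⟨fun a h => h.1 rfl⟩

lemma cliqueOn_adj {R : Type*} {Y : Set R} {a b : R} :
    (cliqueOn Y).Adj a b ↔ a ≠ b ∧ a ∈ Y ∧ b ∈ Y := Iff.rfl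

lemma cliqueOn_empty {R : Type*} : cliqueOn (∅ : Set R) = ⊥ := by
  ext a b; simp [cliqueOn_adj]

def thrG {R : Type*} (u : Sym2 R → ℝ) (t : ℝ) : SimpleGraph R :=
  SimpleGraph.fromEdgeSet {e | u e < t}

lemma thrG_adj {R : Type*} {u : Sym2 R → ℝ} {t : ℝ} {a b : R} :
    (thrG u t).Adj a b ↔ u s(a, b) < t ∧ a ≠ b := by
  simp [thrG, SimpleGraph.fromEdgeSet_adj]

lemma thrG_mono {R : Type*} {u : Sym2 R → ℝ} {t1 t2 : ℝ} (h : t1 ≤ t2) :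
    thrG u t1 ≤ thrG u t2 := by
  intro a b hab
  rw [thrG_adj] at hab ⊢
  exact ⟨lt_of_lt_of_le hab.1 h, hab.2⟩

noncomputable def nComp {R : Type*} (G : SimpleGraph R) (X : Set R) : ℝ :=
  ((G.connectedComponentMk '' X).ncard : ℝ) - 1

lemma contract_mk_eq_iff {R : Type*} {X : Set R} {a b : R} :
    Quotient.mk (contractSetoid X) a = Quotient.mk (contractSetoid X) b ↔
      (a = b ∨ (a ∈ X ∧ b ∈ X)) :=
  ⟨fun h => Quotient.exact h, fun h => Quotient.sound h⟩

lemma reachable_sup_clique {R : Type*} {G : SimpleGraph R} {Y : Set R} {a b : R} :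
    (G ⊔ cliqueOn Y).Reachable a b ↔
      G.Reachable a b ∨ ((∃ y ∈ Y, G.Reachable a y) ∧ ∃ y ∈ Y, G.Reachable y b) := by
  constructor
  · intro h
    rw [SimpleGraph.reachable_iff_reflTransGen] at h
    induction h with
    | refl => exact Or.inl (SimpleGraph.Reachable.refl a)
    | @tail c b' h1 h2 ih =>
      rcases (SimpleGraph.sup_adj _ _ _ _).1 h2 with hG | hK
      · rcases ih with hr | ⟨h3, y, hy, h4⟩
        · exact Or.inl (hr.trans hG.reachable)
        · exact Or.inr ⟨h3, y, hy, h4.trans hG.reachable⟩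
      · obtain ⟨hne, hc, hb⟩ := hK
        refine Or.inr ⟨?_, b', hb, SimpleGraph.Reachable.refl _⟩
        rcases ih with hr | ⟨h3, _⟩
        · exact ⟨c, hc, hr⟩
        · exact h3
  · rintro (h | ⟨⟨y1, hy1, h1⟩, y2, hy2, h2⟩)
    · exact h.mono le_sup_left
    · have hmid : (G ⊔ cliqueOn Y).Reachable y1 y2 := by
        by_cases hy : y1 = y2
        · subst hy; exact SimpleGraph.Reachable.refl _
        · exact (SimpleGraph.Adj.reachable (by
            exact (SimpleGraph.sup_adj _ _ _ _).2 (Or.inr ⟨hy, hy1, hy2⟩)))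
      exact ((h1.mono le_sup_left).trans hmid).trans (h2.mono le_sup_left)

lemma reachable_transfer {R Q : Type*} {f : R → Q}
    {S : SimpleGraph Q} {T : SimpleGraph R}
    (hα : ∀ a b, T.Adj a b → S.Reachable (f a) (f b))
    (hβ : ∀ q q', S.Adj q q' → ∃ a b, f a = q ∧ f b = q' ∧ T.Reachable a b)
    (hγ : ∀ a b, f a = f b → T.Reachable a b) (a b : R) :
    S.Reachable (f a) (f b) ↔ T.Reachable a b := by
  constructor
  · intro h
    have main : ∀ q q', Relation.ReflTransGen S.Adj q q' →
        ∀ a b : R, f a = q → f b = q' → T.Reachable a b := by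
      intro q q' h
      induction h with
      | refl => intro a b ha hb; exact hγ a b (ha.trans hb.symm)
      | @tail c q' h1 h2 ih =>
        intro a b ha hb
        obtain ⟨a', b', ha', hb', hr⟩ := hβ _ _ h2
        exact ((ih a a' ha ha').trans hr).trans (hγ b' b (hb'.trans hb.symm))
    exact main _ _ ((SimpleGraph.reachable_iff_reflTransGen _ _).1 h) a b rfl rfl
  · intro h
    rw [SimpleGraph.reachable_iff_reflTransGen] at h
    induction h with
    | refl => exact SimpleGraph.Reachable.refl _
    | @tail c b' h1 h2 ih => exact ih.trans (hα _ _ h2)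

lemma nComp_mono {R : Type*} [Finite R] {G G' : SimpleGraph R} (h : G ≤ G') (X : Set R) :
    nComp G' X ≤ nComp G X := by
  have hle := ncard_image_le_of_ker X X.toFinite G.connectedComponentMk G'.connectedComponentMk
    (fun a _ b _ hab =>
      SimpleGraph.ConnectedComponent.eq.2 ((SimpleGraph.ConnectedComponent.eq.1 hab).mono h))
  exact sub_le_sub_right (Nat.cast_le.2 hle) 1

lemma count_sup_clique {R : Type*} [Finite R] (G : SimpleGraph R) {X : Set R} (hX : X.Nonempty) :
    ((G ⊔ cliqueOn X).connectedComponentMk '' Set.univ).ncard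
      + (G.connectedComponentMk '' X).ncard
      = (G.connectedComponentMk '' Set.univ).ncard + 1 := by
  classical
  set f := G.connectedComponentMk with hf
  set g := (G ⊔ cliqueOn X).connectedComponentMk with hg
  obtain ⟨x0, hx0⟩ := hX
  set S : Set R := {a | ∃ y ∈ X, G.Reachable a y} with hS
  have hXS : X ⊆ S := fun y hy => ⟨y, hy, SimpleGraph.Reachable.refl y⟩
  have hfS : f '' S = f '' X := by
    apply subset_antisymm
    · rintro _ ⟨a, ⟨y, hy, hr⟩, rfl⟩
      exact ⟨y, hy, (SimpleGraph.ConnectedComponent.eq.2 hr).symm⟩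
    · exact Set.image_mono hXS
  have hsplitf : f '' Set.univ = f '' S ∪ f '' Sᶜ := by
    rw [← Set.image_union, Set.union_compl_self]
  have hdisjf : Disjoint (f '' S) (f '' Sᶜ) := by
    rw [Set.disjoint_left]
    rintro _ ⟨a, ha, rfl⟩ ⟨b, hb, hfb⟩
    obtain ⟨y, hy, hr⟩ := ha
    exact hb ⟨y, hy, (SimpleGraph.ConnectedComponent.eq.1 hfb).trans hr⟩
  have hgS : g '' S = {g x0} := by
    apply subset_antisymm
    · rintro _ ⟨a, ha, rfl⟩
      refine Set.mem_singleton_iff.2 (SimpleGraph.ConnectedComponent.eq.2 ?_)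
      exact reachable_sup_clique.2 (Or.inr ⟨ha, x0, hx0, SimpleGraph.Reachable.refl _⟩)
    · rintro _ rfl
      exact ⟨x0, hXS hx0, rfl⟩
  have hsplitg : g '' Set.univ = g '' Sᶜ ∪ {g x0} := by
    rw [← hgS, ← Set.image_union, Set.compl_union_self]
  have hdisjg : Disjoint (g '' Sᶜ) ({g x0} : Set _) := by
    rw [Set.disjoint_left]
    rintro _ ⟨b, hb, rfl⟩ hmem
    rw [Set.mem_singleton_iff] at hmem
    rcases reachable_sup_clique.1 (SimpleGraph.ConnectedComponent.eq.1 hmem) with hr | ⟨h3, _⟩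
    · exact hb ⟨x0, hx0, hr⟩
    · exact hb h3
  have hker : (g '' Sᶜ).ncard = (f '' Sᶜ).ncard := by
    apply (ncard_image_eq_of_ker Sᶜ Sᶜ.toFinite g f ?_)
    intro a ha b hb
    rw [SimpleGraph.ConnectedComponent.eq, SimpleGraph.ConnectedComponent.eq]
    constructor
    · intro h
      rcases reachable_sup_clique.1 h with hr | ⟨h3, _⟩
      · exact hr
      · exact absurd h3 ha
    · intro h
      exact h.mono le_sup_left
  rw [hsplitf, hsplitg, Set.ncard_union_eq hdisjf, Set.ncard_union_eq hdisjg, hker, hfS,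
    Set.ncard_singleton]
  ring
section QuotCost
variable {R : Type*} [Finite R] {u : Sym2 R → ℝ} (sd : Setoid R)

lemma quotCost_set_nonempty (e : Sym2 (Quotient sd)) :
    {v : ℝ | ∃ a b : R, s(Quotient.mk sd a, Quotient.mk sd b) = e ∧ v = u s(a, b)}.Nonempty := by
  induction e using Sym2.inductionOn with
  | hf x y =>
    obtain ⟨a, rfl⟩ := Quotient.exists_rep x
    obtain ⟨b, rfl⟩ := Quotient.exists_rep y
    exact ⟨u s(a, b), a, b, rfl, rfl⟩

lemma quotCost_set_finite (e : Sym2 (Quotient sd)) :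
    {v : ℝ | ∃ a b : R, s(Quotient.mk sd a, Quotient.mk sd b) = e ∧ v = u s(a, b)}.Finite := by
  apply (Set.finite_range u).subset
  rintro v ⟨a, b, _, rfl⟩
  exact ⟨s(a, b), rfl⟩

variable (hu : ∀ e, 0 ≤ u e)
include hu

lemma quotCost_set_bddBelow (e : Sym2 (Quotient sd)) :
    BddBelow {v : ℝ | ∃ a b : R, s(Quotient.mk sd a, Quotient.mk sd b) = e ∧ v = u s(a, b)} := by
  refine ⟨0, ?_⟩
  rintro v ⟨a, b, _, rfl⟩
  exact hu _

lemma quotCost_nonneg (e : Sym2 (Quotient sd)) : 0 ≤ quotCost u sd e := by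
  apply le_csInf (quotCost_set_nonempty sd e)
  rintro v ⟨a, b, _, rfl⟩
  exact hu _

lemma quotCost_map_le (a b : R) :
    quotCost u sd s(Quotient.mk sd a, Quotient.mk sd b) ≤ u s(a, b) :=
  csInf_le (quotCost_set_bddBelow sd hu _) ⟨a, b, rfl, rfl⟩

lemma quotCost_lt_iff (e : Sym2 (Quotient sd)) (t : ℝ) :
    quotCost u sd e < t ↔
      ∃ a b : R, s(Quotient.mk sd a, Quotient.mk sd b) = e ∧ u s(a, b) < t := by
  rw [quotCost, csInf_lt_iff (quotCost_set_bddBelow sd hu e) (quotCost_set_nonempty sd e)]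
  constructor
  · rintro ⟨v, ⟨a, b, he, rfl⟩, hv⟩
    exact ⟨a, b, he, hv⟩
  · rintro ⟨a, b, he, hv⟩
    exact ⟨u s(a, b), ⟨a, b, he, rfl⟩, hv⟩

omit hu

lemma quotCost_exists_rep (e : Sym2 (Quotient sd)) :
    ∃ e' : Sym2 R, Sym2.map (Quotient.mk sd) e' = e ∧ quotCost u sd e = u e' := by
  have hmem := Set.Nonempty.csInf_mem (quotCost_set_nonempty (u := u) sd e)
    (quotCost_set_finite sd e)
  obtain ⟨a, b, he, hv⟩ := hmem
  exact ⟨s(a, b), by rw [Sym2.map_pair_eq, he], hv⟩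

end QuotCost

section ThrQuot
variable {R : Type*} [Finite R] {u : Sym2 R → ℝ}

lemma thr_quot_reachable (hu : ∀ e, 0 ≤ u e) (Y : Set R) (t : ℝ) (a b : R) :
    (thrG (quotCost u (contractSetoid Y)) t).Reachable
        (Quotient.mk (contractSetoid Y) a) (Quotient.mk (contractSetoid Y) b)
      ↔ (thrG u t ⊔ cliqueOn Y).Reachable a b := by
  apply reachable_transfer
  · intro a b hab
    rcases (SimpleGraph.sup_adj _ _ _ _).1 hab with h | h
    · rw [thrG_adj] at h
      by_cases hq : Quotient.mk (contractSetoid Y) a = Quotient.mk (contractSetoid Y) b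
      · rw [hq]
      · refine SimpleGraph.Adj.reachable (thrG_adj.2 ⟨?_, hq⟩)
        calc quotCost u (contractSetoid Y) s(Quotient.mk _ a, Quotient.mk _ b)
            ≤ u s(a, b) := quotCost_map_le _ hu a b
          _ < t := h.1
    · rw [contract_mk_eq_iff.2 (Or.inr ⟨h.2.1, h.2.2⟩)]
  · intro q q' hqq
    rw [thrG_adj] at hqq
    obtain ⟨a, b, he, hlt⟩ := (quotCost_lt_iff (contractSetoid Y) hu _ t).1 hqq.1
    have hab : a ≠ b := by
      rintro rfl
      rcases Sym2.eq_iff.1 he with h | h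
      · exact hqq.2 (h.1.symm.trans h.2)
      · exact hqq.2 (h.2.symm.trans h.1)
    rcases Sym2.eq_iff.1 he with h | h
    · exact ⟨a, b, h.1, h.2, SimpleGraph.Adj.reachable
        ((SimpleGraph.sup_adj _ _ _ _).2 (Or.inl (thrG_adj.2 ⟨hlt, hab⟩)))⟩
    · exact ⟨b, a, h.2, h.1, SimpleGraph.Adj.reachable
        ((SimpleGraph.sup_adj _ _ _ _).2 (Or.inl (thrG_adj.2 ⟨by rwa [Sym2.eq_swap], hab.symm⟩)))⟩
  · intro a b h
    rcases contract_mk_eq_iff.1 h with rfl | ⟨ha, hb⟩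
    · exact SimpleGraph.Reachable.refl _
    · by_cases hab : a = b
      · subst hab; exact SimpleGraph.Reachable.refl _
      · exact SimpleGraph.Adj.reachable
          ((SimpleGraph.sup_adj _ _ _ _).2 (Or.inr ⟨hab, ha, hb⟩))
lemma thr_quot_reachable2 (hu : ∀ e, 0 ≤ u e) (Y X : Set R) (t : ℝ) (a b : R) :
    (thrG (quotCost u (contractSetoid Y)) t
        ⊔ cliqueOn (Quotient.mk (contractSetoid Y) '' X)).Reachable
        (Quotient.mk (contractSetoid Y) a) (Quotient.mk (contractSetoid Y) b)
      ↔ (thrG u t ⊔ cliqueOn Y ⊔ cliqueOn X).Reachable a b := by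
  apply reachable_transfer
  · intro a b hab
    rcases (SimpleGraph.sup_adj _ _ _ _).1 hab with h | h
    · rcases (SimpleGraph.sup_adj _ _ _ _).1 h with h' | h'
      · rw [thrG_adj] at h'
        by_cases hq : Quotient.mk (contractSetoid Y) a = Quotient.mk (contractSetoid Y) b
        · rw [hq]
        · refine SimpleGraph.Adj.reachable ((SimpleGraph.sup_adj _ _ _ _).2 (Or.inl
            (thrG_adj.2 ⟨?_, hq⟩)))
          calc quotCost u (contractSetoid Y) s(Quotient.mk _ a, Quotient.mk _ b)
              ≤ u s(a, b) := quotCost_map_le _ hu a b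
            _ < t := h'.1
      · rw [contract_mk_eq_iff.2 (Or.inr ⟨h'.2.1, h'.2.2⟩)]
    · by_cases hq : Quotient.mk (contractSetoid Y) a = Quotient.mk (contractSetoid Y) b
      · rw [hq]
      · exact SimpleGraph.Adj.reachable ((SimpleGraph.sup_adj _ _ _ _).2 (Or.inr
          ⟨hq, ⟨a, h.2.1, rfl⟩, ⟨b, h.2.2, rfl⟩⟩))
  · intro q q' hqq
    rcases (SimpleGraph.sup_adj _ _ _ _).1 hqq with h | h
    · rw [thrG_adj] at h
      obtain ⟨a, b, he, hlt⟩ := (quotCost_lt_iff (contractSetoid Y) hu _ t).1 h.1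
      have hab : a ≠ b := by
        rintro rfl
        rcases Sym2.eq_iff.1 he with h' | h'
        · exact h.2 (h'.1.symm.trans h'.2)
        · exact h.2 (h'.2.symm.trans h'.1)
      have hreach : (thrG u t ⊔ cliqueOn Y ⊔ cliqueOn X).Reachable a b :=
        SimpleGraph.Adj.reachable ((SimpleGraph.sup_adj _ _ _ _).2 (Or.inl
          ((SimpleGraph.sup_adj _ _ _ _).2 (Or.inl (thrG_adj.2 ⟨hlt, hab⟩)))))
      rcases Sym2.eq_iff.1 he with h' | h'
      · exact ⟨a, b, h'.1, h'.2, hreach⟩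
      · exact ⟨b, a, h'.2, h'.1, hreach.symm⟩
    · obtain ⟨hne, ⟨a, ha, rfl⟩, ⟨b, hb, rfl⟩⟩ := h
      have hab : a ≠ b := fun h' => hne (by rw [h'])
      exact ⟨a, b, rfl, rfl, SimpleGraph.Adj.reachable ((SimpleGraph.sup_adj _ _ _ _).2
        (Or.inr ⟨hab, ha, hb⟩))⟩
  · intro a b h
    rcases contract_mk_eq_iff.1 h with rfl | ⟨ha, hb⟩
    · exact SimpleGraph.Reachable.refl _
    · by_cases hab : a = b
      · subst hab; exact SimpleGraph.Reachable.refl _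
      · exact SimpleGraph.Adj.reachable ((SimpleGraph.sup_adj _ _ _ _).2 (Or.inl
          ((SimpleGraph.sup_adj _ _ _ _).2 (Or.inr ⟨hab, ha, hb⟩))))

lemma nComp_quot (hu : ∀ e, 0 ≤ u e) (Y : Set R) (t : ℝ) (S : Set R) :
    nComp (thrG (quotCost u (contractSetoid Y)) t) (Quotient.mk (contractSetoid Y) '' S)
      = nComp (thrG u t ⊔ cliqueOn Y) S := by
  unfold nComp
  rw [← Set.image_comp]
  congr 2
  apply ncard_image_eq_of_ker S S.toFinite
  intro a _ b _
  simp only [Function.comp_apply]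
  rw [SimpleGraph.ConnectedComponent.eq, SimpleGraph.ConnectedComponent.eq]
  exact thr_quot_reachable hu Y t a b

lemma nComp_quot2 (hu : ∀ e, 0 ≤ u e) (Y X : Set R) (t : ℝ) (S : Set R) :
    nComp (thrG (quotCost u (contractSetoid Y)) t
        ⊔ cliqueOn (Quotient.mk (contractSetoid Y) '' X))
      (Quotient.mk (contractSetoid Y) '' S)
      = nComp (thrG u t ⊔ cliqueOn Y ⊔ cliqueOn X) S := by
  unfold nComp
  rw [← Set.image_comp]
  congr 2
  apply ncard_image_eq_of_ker S S.toFinite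
  intro a _ b _
  simp only [Function.comp_apply]
  rw [SimpleGraph.ConnectedComponent.eq, SimpleGraph.ConnectedComponent.eq]
  exact thr_quot_reachable2 hu Y X t a b

end ThrQuot

section NCompIntegrable
variable {R : Type*} [Finite R]

lemma thr_reach_big (u : Sym2 R → ℝ) :
    ∃ T, 0 ≤ T ∧ ∀ t, T < t → ∀ a b : R, (thrG u t).Reachable a b := by
  obtain ⟨T0, hT0⟩ := (Set.finite_range u).bddAbove
  refine ⟨max T0 0, le_max_right _ _, fun t ht a b => ?_⟩
  by_cases hab : a = b
  · subst hab; exact SimpleGraph.Reachable.refl _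
  · refine SimpleGraph.Adj.reachable (thrG_adj.2 ⟨?_, hab⟩)
    exact lt_of_le_of_lt (le_trans (hT0 ⟨s(a, b), rfl⟩) (le_max_left _ _)) ht

lemma nComp_abs_le (G : SimpleGraph R) {X : Set R} (hX : X.Nonempty) :
    |nComp G X| ≤ (Nat.card R : ℝ) := by
  have h1 : 1 ≤ (G.connectedComponentMk '' X).ncard := by
    rw [Nat.one_le_iff_ne_zero, ← Nat.pos_iff_ne_zero]
    exact (Set.ncard_pos (X.toFinite.image _)).2 (hX.image _)
  have h2 : (G.connectedComponentMk '' X).ncard ≤ Nat.card R := by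
    refine le_trans (Set.ncard_image_le X.toFinite) ?_
    rw [← Set.ncard_univ]
    exact Set.ncard_le_ncard (Set.subset_univ X) Set.univ.toFinite
  have h1' : (1:ℝ) ≤ ((G.connectedComponentMk '' X).ncard : ℝ) := by exact_mod_cast h1
  have h2' : ((G.connectedComponentMk '' X).ncard : ℝ) ≤ (Nat.card R : ℝ) := by exact_mod_cast h2
  have h0 : (0:ℝ) ≤ (Nat.card R : ℝ) := Nat.cast_nonneg _
  rw [abs_le]; unfold nComp; constructor <;> linarith

lemma nComp_integrableOn (u : Sym2 R → ℝ) (G0 : SimpleGraph R) {X : Set R} (hX : X.Nonempty) :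
    IntegrableOn (fun t => nComp (thrG u t ⊔ G0) X) (Set.Ioi (0:ℝ)) := by
  obtain ⟨T, hT0, hT⟩ := thr_reach_big u
  apply integrableOn_Ioi_of_antitoneOn (C := (Nat.card R : ℝ)) hT0
  · intro t1 _ t2 _ h12
    exact nComp_mono (sup_le_sup_right (thrG_mono h12) G0) X
  · intro t ht
    obtain ⟨x0, hx0⟩ := hX
    have himg : (thrG u t ⊔ G0).connectedComponentMk '' X
        = {(thrG u t ⊔ G0).connectedComponentMk x0} := by
      apply subset_antisymm
      · rintro _ ⟨a, _, rfl⟩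
        exact Set.mem_singleton_iff.2 (SimpleGraph.ConnectedComponent.eq.2
          ((hT t ht a x0).mono le_sup_left))
      · rintro _ rfl
        exact ⟨x0, hx0, rfl⟩
    simp [nComp, himg]
  · intro t _
    exact nComp_abs_le _ hX

end NCompIntegrable
section SpanningTree
variable {V : Type*}

lemma exists_spanning_tree [Finite V] :
    ∀ (n : ℕ) (G : SimpleGraph V), G.edgeSet.ncard = n → G.Connected →
      ∃ H : SimpleGraph V, H ≤ G ∧ H.IsTree := by
  intro n
  induction n using Nat.strong_induction_on with
  | _ n IH =>
    intro G hn hG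
    by_cases hac : G.IsAcyclic
    · exact ⟨G, le_rfl, hG, hac⟩
    · rw [SimpleGraph.isAcyclic_iff_forall_adj_isBridge] at hac
      push_neg at hac
      obtain ⟨v, w, hadj, hnb⟩ := hac
      rw [SimpleGraph.isBridge_iff] at hnb
      push_neg at hnb
      have hreach := hnb
      set G' := G \ SimpleGraph.fromEdgeSet {s(v, w)} with hG'
      have hle : G' ≤ G := sdiff_le
      have hstep : ∀ a b : V, G.Adj a b → G'.Reachable a b := by
        intro a b hab
        by_cases he : s(a, b) = s(v, w)
        · rcases Sym2.eq_iff.1 he with h | h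
          · rw [h.1, h.2]; exact hreach
          · rw [h.1, h.2]; exact hreach.symm
        · refine SimpleGraph.Adj.reachable ?_
          rw [hG', SimpleGraph.sdiff_adj]
          refine ⟨hab, fun hc => he ?_⟩
          rcases (SimpleGraph.fromEdgeSet_adj _).1 hc with ⟨hmem, _⟩
          exact Set.mem_singleton_iff.1 hmem
      have hconn' : G'.Connected := by
        haveI : Nonempty V := hG.nonempty
        refine ⟨fun a b => ?_⟩
        exact ((reachable_transfer (f := fun x : V => x) (S := G) (T := G')
          (fun a b hab => hab.reachable.mono hle) (fun q q' hqq => ⟨q, q', rfl, rfl, hstep q q' hqq⟩)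
          (fun a b hab => by exact hab ▸ SimpleGraph.Reachable.refl _) a b)).1 (hG.preconnected a b)
      have hedge : G'.edgeSet = G.edgeSet \ {s(v, w)} := by
        rw [hG', SimpleGraph.edgeSet_sdiff, SimpleGraph.edgeSet_fromEdgeSet,
          SimpleGraph.edgeSet_sdiff_sdiff_isDiag]
      have hlt : G'.edgeSet.ncard < n := by
        rw [hedge, ← hn]
        have hmem : s(v, w) ∈ G.edgeSet := hadj
        have hfin : G.edgeSet.Finite := Set.toFinite _
        have hpos : 0 < G.edgeSet.ncard := (Set.ncard_pos hfin).2 ⟨_, hmem⟩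
        rw [Set.ncard_diff_singleton_of_mem hmem]
        omega
      obtain ⟨H, hH1, hH2⟩ := IH _ hlt G' rfl hconn'
      exact ⟨H, le_trans hH1 hle, hH2⟩

end SpanningTree

section MstFacts
variable {R : Type*} [Finite R]

lemma mst_set_bddBelow {u : Sym2 R → ℝ} (hu : ∀ e, 0 ≤ u e) :
    BddBelow {w : ℝ | ∃ T : Finset (Sym2 R), (∀ e ∈ T, ¬ e.IsDiag) ∧
      (SimpleGraph.fromEdgeSet (↑T : Set (Sym2 R))).Connected ∧
      T.card + 1 = Nat.card R ∧ w = ∑ e ∈ T, u e} := by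
  refine ⟨0, ?_⟩
  rintro w ⟨T, _, _, _, rfl⟩
  exact Finset.sum_nonneg fun e _ => hu e

lemma mst_set_nonempty [Nonempty R] (u : Sym2 R → ℝ) :
    {w : ℝ | ∃ T : Finset (Sym2 R), (∀ e ∈ T, ¬ e.IsDiag) ∧
      (SimpleGraph.fromEdgeSet (↑T : Set (Sym2 R))).Connected ∧
      T.card + 1 = Nat.card R ∧ w = ∑ e ∈ T, u e}.Nonempty := by
  classical
  letI := Fintype.ofFinite R
  obtain ⟨r0⟩ := ‹Nonempty R›
  set T : Finset (Sym2 R) := (Finset.univ.erase r0).image (fun z => s(r0, z)) with hT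
  have hdiag : ∀ e ∈ T, ¬ e.IsDiag := by
    intro e he
    rw [hT, Finset.mem_image] at he
    obtain ⟨z, hz, rfl⟩ := he
    rw [Sym2.mk_isDiag_iff]
    exact fun h => (Finset.mem_erase.1 hz).1 h.symm
  have hcard : T.card + 1 = Nat.card R := by
    rw [hT, Finset.card_image_of_injOn (fun z1 _ z2 _ h => Sym2.congr_right.1 h),
      Finset.card_erase_of_mem (Finset.mem_univ r0), Nat.card_eq_fintype_card,
      ← Finset.card_univ]
    have : 0 < Finset.univ.card := Finset.card_pos.2 ⟨r0, Finset.mem_univ r0⟩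
    omega
  have hconn : (SimpleGraph.fromEdgeSet (↑T : Set (Sym2 R))).Connected := by
    have hr0 : ∀ a : R, (SimpleGraph.fromEdgeSet (↑T : Set (Sym2 R))).Reachable a r0 := by
      intro a
      by_cases ha : a = r0
      · subst ha; exact SimpleGraph.Reachable.refl _
      · refine SimpleGraph.Adj.reachable ((SimpleGraph.fromEdgeSet_adj _).2 ⟨?_, ha⟩)
        rw [Finset.mem_coe, hT, Sym2.eq_swap]
        exact Finset.mem_image.2 ⟨a, Finset.mem_erase.2 ⟨ha, Finset.mem_univ a⟩, rfl⟩
    exact ⟨fun a b => (hr0 a).trans (hr0 b).symm⟩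
  exact ⟨∑ e ∈ T, u e, T, hdiag, hconn, hcard, rfl⟩

lemma card_quotient_pair {x y : R} (hxy : x ≠ y) :
    Nat.card (Quotient (contractSetoid ({x, y} : Set R))) + 1 = Nat.card R := by
  classical
  set sd := contractSetoid ({x, y} : Set R) with hsd
  have hresp : ∀ a b : R, sd.r a b → (if a = y then x else a) = (if b = y then x else b) := by
    intro a b hab
    rcases hab with rfl | ⟨ha, hb⟩
    · rfl
    · simp only [Set.mem_insert_iff, Set.mem_singleton_iff] at ha hb
      rcases ha with rfl | rfl <;> rcases hb with rfl | rfl <;> simp [hxy]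
  set g : Quotient sd → R := Quotient.lift (fun z => if z = y then x else z) hresp with hgdef
  have ginj : Function.Injective g := by
    intro qa qb
    induction qa using Quotient.ind
    induction qb using Quotient.ind
    rename_i a b
    intro h
    simp only [hgdef, Quotient.lift_mk] at h
    apply Quotient.sound
    show a = b ∨ _
    by_cases ha : a = y <;> by_cases hb : b = y <;> simp [ha, hb] at h
    · exact Or.inl (ha.trans hb.symm)
    · subst ha; exact Or.inr ⟨by simp, by simp [← h]⟩
    · subst hb; exact Or.inr ⟨by simp [h], by simp⟩
    · exact Or.inl h
  have hrange : Set.range g = {z : R | z ≠ y} := by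
    ext z
    constructor
    · rintro ⟨q, rfl⟩
      induction q using Quotient.ind
      rename_i a
      simp only [hgdef, Quotient.lift_mk, Set.mem_setOf_eq]
      by_cases ha : a = y <;> simp [ha, hxy]
    · intro hz
      exact ⟨Quotient.mk sd z, by simp [hgdef, if_neg hz]⟩
  have h1 : Nat.card (Quotient sd) = Nat.card (Set.range g) :=
    (Nat.card_range_of_injective ginj).symm
  rw [h1, Nat.card_coe_set_eq]
  have h2 : ({z : R | z ≠ y} : Set R) = Set.univ \ {y} := by
    ext z; simp
  rw [hrange, h2, Set.ncard_diff_singleton_of_mem (Set.mem_univ y),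
    Set.ncard_univ]
  have : 0 < Nat.card R := Nat.card_pos_iff.2 ⟨⟨x⟩, ‹Finite R›⟩
  omega

end MstFacts
lemma sym2_exists_rep {α : Type*} (e : Sym2 α) : ∃ a b : α, e = s(a, b) :=
  Sym2.inductionOn e (fun a b => ⟨a, b, rfl⟩)

lemma sym2_map_isDiag {α β : Type*} (f : α → β) {e : Sym2 α} (h : e.IsDiag) :
    (Sym2.map f e).IsDiag := by
  obtain ⟨a, b, rfl⟩ := sym2_exists_rep e
  rw [Sym2.mk_isDiag_iff] at h
  rw [Sym2.map_pair_eq, Sym2.mk_isDiag_iff]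
  exact congrArg f h

lemma quotCost_map_le' {R : Type*} [Finite R] {u : Sym2 R → ℝ} (sd : Setoid R)
    (hu : ∀ e, 0 ≤ u e) (e : Sym2 R) :
    quotCost u sd (Sym2.map (Quotient.mk sd) e) ≤ u e := by
  obtain ⟨a, b, rfl⟩ := sym2_exists_rep e
  rw [Sym2.map_pair_eq]
  exact quotCost_map_le sd hu a b

lemma mk_image_univ {R : Type*} (sd : Setoid R) :
    Quotient.mk sd '' Set.univ = Set.univ := by
  rw [Set.image_univ, Set.range_eq_univ]
  exact fun q => Quotient.exists_rep q

lemma thrG_eq_bot {R : Type*} {u : Sym2 R → ℝ} {t : ℝ}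
    (h : ∀ a b : R, a ≠ b → t ≤ u s(a, b)) : thrG u t = ⊥ := by
  ext a b
  rw [thrG_adj]
  simp only [SimpleGraph.bot_adj, iff_false]
  rintro ⟨hlt, hne⟩
  exact absurd hlt (not_lt.2 (h a b hne))

lemma nComp_bot {R : Type*} [Finite R] :
    nComp (⊥ : SimpleGraph R) Set.univ = (Nat.card R : ℝ) - 1 := by
  unfold nComp
  rw [Set.ncard_image_of_injOn
    (fun a _ b _ h => SimpleGraph.reachable_bot.1 (SimpleGraph.ConnectedComponent.eq.1 h)),
    Set.ncard_univ]

lemma nComp_bot_clique {R : Type*} [Finite R] (P : Set R) :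
    nComp ((⊥ : SimpleGraph R) ⊔ cliqueOn P) Set.univ
      = (Nat.card (Quotient (contractSetoid P)) : ℝ) - 1 := by
  unfold nComp
  have hker := ncard_image_eq_of_ker Set.univ Set.univ.toFinite
    ((⊥ : SimpleGraph R) ⊔ cliqueOn P).connectedComponentMk
    (Quotient.mk (contractSetoid P)) ?_
  · rw [hker, mk_image_univ, Set.ncard_univ]
  · intro a _ b _
    rw [SimpleGraph.ConnectedComponent.eq, contract_mk_eq_iff, reachable_sup_clique]
    simp only [SimpleGraph.reachable_bot]
    constructor
    · rintro (rfl | ⟨⟨y1, hy1, rfl⟩, y2, hy2, rfl⟩)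
      · exact Or.inl rfl
      · exact Or.inr ⟨hy1, hy2⟩
    · rintro (rfl | ⟨ha, hb⟩)
      · exact Or.inl rfl
      · exact Or.inr ⟨⟨a, ha, rfl⟩, b, hb, rfl⟩

lemma mst_contract_pair {R : Type*} [Finite R] [Nonempty R] (u : Sym2 R → ℝ)
    (hu : ∀ e, 0 ≤ u e) {x0 y0 : R} (hxy : x0 ≠ y0)
    (hmin : ∀ a b : R, a ≠ b → u s(x0, y0) ≤ u s(a, b)) :
    mstCost u = u s(x0, y0)
      + mstCost (quotCost u (contractSetoid ({x0, y0} : Set R))) := by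
  classical
  set t0 := u s(x0, y0) with ht0def
  set sd := contractSetoid ({x0, y0} : Set R) with hsddef
  haveI hQne : Nonempty (Quotient sd) := ⟨Quotient.mk sd x0⟩
  have hcardQ : Nat.card (Quotient sd) + 1 = Nat.card R := card_quotient_pair hxy
  have hx0P : x0 ∈ ({x0, y0} : Set R) := by simp
  have hy0P : y0 ∈ ({x0, y0} : Set R) := by simp
  have hmkxy : Quotient.mk sd x0 = Quotient.mk sd y0 :=
    contract_mk_eq_iff.2 (Or.inr ⟨hx0P, hy0P⟩)
  apply le_antisymm
  · -- mst u ≤ t0 + mst u'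
    rw [← sub_le_iff_le_add']
    apply le_csInf (mst_set_nonempty _)
    rintro w' ⟨T', hdiag', hconn', hcard', rfl⟩
    rw [sub_le_iff_le_add']
    choose ψ hψ1 hψ2 using (fun e' => quotCost_exists_rep (u := u) sd e')
    set T : Finset (Sym2 R) := insert s(x0, y0) (T'.image ψ) with hTdef
    have hψinj : Function.Injective ψ := fun e1 e2 h => by
      rw [← hψ1 e1, ← hψ1 e2, h]
    have hnotmem : s(x0, y0) ∉ T'.image ψ := by
      rw [Finset.mem_image]
      rintro ⟨e', he', heq⟩
      have : e'.IsDiag := by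
        rw [← hψ1 e', heq, Sym2.map_pair_eq, Sym2.mk_isDiag_iff]
        exact hmkxy
      exact hdiag' e' he' this
    have hTdiag : ∀ e ∈ T, ¬ e.IsDiag := by
      intro e he
      rcases Finset.mem_insert.1 he with rfl | he
      · rw [Sym2.mk_isDiag_iff]; exact hxy
      · rw [Finset.mem_image] at he
        obtain ⟨e', he', rfl⟩ := he
        intro hd
        exact hdiag' e' he' (by rw [← hψ1 e']; exact sym2_map_isDiag _ hd)
    have hTcard : T.card + 1 = Nat.card R := by
      rw [hTdef, Finset.card_insert_of_notMem hnotmem,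
        Finset.card_image_of_injOn (hψinj.injOn)]
      omega
    have hTconn : (SimpleGraph.fromEdgeSet (↑T : Set (Sym2 R))).Connected := by
      have hxyreach : (SimpleGraph.fromEdgeSet (↑T : Set (Sym2 R))).Reachable x0 y0 :=
        SimpleGraph.Adj.reachable ((SimpleGraph.fromEdgeSet_adj _).2
          ⟨Finset.mem_coe.2 (Finset.mem_insert_self _ _), hxy⟩)
      have hγ : ∀ a b : R, Quotient.mk sd a = Quotient.mk sd b →
          (SimpleGraph.fromEdgeSet (↑T : Set (Sym2 R))).Reachable a b := by
        intro a b h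
        rcases contract_mk_eq_iff.1 h with rfl | ⟨ha, hb⟩
        · exact SimpleGraph.Reachable.refl _
        · simp only [Set.mem_insert_iff, Set.mem_singleton_iff] at ha hb
          rcases ha with rfl | rfl <;> rcases hb with rfl | rfl
          · exact SimpleGraph.Reachable.refl _
          · exact hxyreach
          · exact hxyreach.symm
          · exact SimpleGraph.Reachable.refl _
      refine ⟨fun a b => ?_⟩
      refine (reachable_transfer (f := Quotient.mk sd)
        (S := SimpleGraph.fromEdgeSet (↑T' : Set (Sym2 (Quotient sd))))
        (T := SimpleGraph.fromEdgeSet (↑T : Set (Sym2 R))) ?_ ?_ hγ a b).1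
        (hconn'.preconnected _ _)
      · intro a b hab
        obtain ⟨hmem, hne⟩ := (SimpleGraph.fromEdgeSet_adj _).1 hab
        rcases Finset.mem_insert.1 (Finset.mem_coe.1 hmem) with heq | hmem'
        · rcases Sym2.eq_iff.1 heq with ⟨rfl, rfl⟩ | ⟨rfl, rfl⟩
          · rw [hmkxy]
          · rw [← hmkxy]
        · rw [Finset.mem_image] at hmem'
          obtain ⟨e', he', heq⟩ := hmem'
          by_cases hq : Quotient.mk sd a = Quotient.mk sd b
          · rw [hq]
          · refine SimpleGraph.Adj.reachable ((SimpleGraph.fromEdgeSet_adj _).2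
              ⟨Finset.mem_coe.2 ?_, hq⟩)
            have : Sym2.map (Quotient.mk sd) s(a, b) = e' := by rw [← heq, hψ1]
            rw [Sym2.map_pair_eq] at this
            rwa [this]
      · intro q q' hqq
        obtain ⟨hmem, hne⟩ := (SimpleGraph.fromEdgeSet_adj _).1 hqq
        obtain ⟨a, b, hab⟩ := sym2_exists_rep (ψ s(q, q'))
        have hmap : s(Quotient.mk sd a, Quotient.mk sd b) = s(q, q') := by
          rw [← Sym2.map_pair_eq, ← hab, hψ1]
        have habne : a ≠ b := by
          rintro rfl
          rcases Sym2.eq_iff.1 hmap with h | h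
          · exact hne (h.1.symm.trans h.2)
          · exact hne (h.2.symm.trans h.1)
        have hadj : (SimpleGraph.fromEdgeSet (↑T : Set (Sym2 R))).Adj a b := by
          refine (SimpleGraph.fromEdgeSet_adj _).2 ⟨Finset.mem_coe.2 ?_, habne⟩
          rw [hTdef]
          exact Finset.mem_insert_of_mem (Finset.mem_image.2
            ⟨s(q, q'), Finset.mem_coe.1 hmem, hab⟩)
        rcases Sym2.eq_iff.1 hmap with h | h
        · exact ⟨a, b, h.1, h.2, hadj.reachable⟩
        · exact ⟨b, a, h.2, h.1, hadj.symm.reachable⟩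
    have hsum : ∑ e ∈ T, u e = t0 + ∑ e' ∈ T', quotCost u sd e' := by
      rw [hTdef, Finset.sum_insert hnotmem, Finset.sum_image
        (fun e1 _ e2 _ h => hψinj h)]
      congr 1
      apply Finset.sum_congr rfl
      intro e' _
      exact (hψ2 e').symm
    calc mstCost u ≤ ∑ e ∈ T, u e :=
          csInf_le (mst_set_bddBelow hu) ⟨T, hTdiag, hTconn, hTcard, rfl⟩
      _ = t0 + ∑ e' ∈ T', quotCost u sd e' := hsum
  · -- t0 + mst u' ≤ mst u
    apply le_csInf (mst_set_nonempty u)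
    rintro w ⟨T, hdiag, hconn, hcard, rfl⟩
    set S : SimpleGraph (Quotient sd) :=
      SimpleGraph.fromEdgeSet (↑(T.image (Sym2.map (Quotient.mk sd))) : Set (Sym2 (Quotient sd)))
      with hSdef
    have hSconn : S.Connected := by
      refine ⟨fun q q' => ?_⟩
      obtain ⟨a, rfl⟩ := Quotient.exists_rep q
      obtain ⟨b, rfl⟩ := Quotient.exists_rep q'
      refine (reachable_transfer (f := Quotient.mk sd) (S := S)
        (T := SimpleGraph.fromEdgeSet (↑T : Set (Sym2 R))) ?_ ?_ ?_ a b).2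
        (hconn.preconnected a b)
      · intro a b hab
        obtain ⟨hmem, hne⟩ := (SimpleGraph.fromEdgeSet_adj _).1 hab
        by_cases hq : Quotient.mk sd a = Quotient.mk sd b
        · rw [hq]
        · refine SimpleGraph.Adj.reachable ((SimpleGraph.fromEdgeSet_adj _).2
            ⟨Finset.mem_coe.2 ?_, hq⟩)
          rw [← Sym2.map_pair_eq]
          exact Finset.mem_image_of_mem _ (Finset.mem_coe.1 hmem)
      · intro q q' _
        obtain ⟨a, rfl⟩ := Quotient.exists_rep q
        obtain ⟨b, rfl⟩ := Quotient.exists_rep q'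
        exact ⟨a, b, rfl, rfl, hconn.preconnected a b⟩
      · intro a b _
        exact hconn.preconnected a b
    obtain ⟨H, hHle, hHtree⟩ := exists_spanning_tree S.edgeSet.ncard S rfl hSconn
    letI : Fintype (Quotient sd) := Fintype.ofFinite _
    letI : Fintype ↑H.edgeSet := (Set.toFinite _).fintype
    set T'' := H.edgeFinset with hT''def
    have hT''card : T''.card + 1 = Nat.card (Quotient sd) := by
      rw [Nat.card_eq_fintype_card]
      exact hHtree.card_edgeFinset
    have hT''diag : ∀ e ∈ T'', ¬ e.IsDiag := fun e he =>
      SimpleGraph.not_isDiag_of_mem_edgeSet _ (SimpleGraph.mem_edgeFinset.1 he)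
    have hT''conn : (SimpleGraph.fromEdgeSet (↑T'' : Set (Sym2 (Quotient sd)))).Connected := by
      rw [hT''def, SimpleGraph.coe_edgeFinset, SimpleGraph.fromEdgeSet_edgeSet]
      exact hHtree.isConnected
    have hpre : ∀ e' ∈ T'', ∃ e, e ∈ T ∧ Sym2.map (Quotient.mk sd) e = e' := by
      intro e' he'
      have h1 : e' ∈ H.edgeSet := SimpleGraph.mem_edgeFinset.1 he'
      have h2 : e' ∈ S.edgeSet := SimpleGraph.edgeSet_mono hHle h1
      rw [hSdef, SimpleGraph.edgeSet_fromEdgeSet] at h2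
      obtain ⟨e, he, hmap⟩ := Finset.mem_image.1 (Finset.mem_coe.1 h2.1)
      exact ⟨e, he, hmap⟩
    set F : Sym2 (Quotient sd) → Sym2 R := fun e' =>
      if h : ∃ e, e ∈ T ∧ Sym2.map (Quotient.mk sd) e = e' then h.choose else s(x0, y0)
      with hFdef
    have hFmem : ∀ e' ∈ T'', F e' ∈ T := by
      intro e' he'
      have hex := hpre e' he'
      simp only [hFdef, dif_pos hex]
      exact hex.choose_spec.1
    have hFmap : ∀ e' ∈ T'', Sym2.map (Quotient.mk sd) (F e') = e' := by
      intro e' he'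
      have hex := hpre e' he'
      simp only [hFdef, dif_pos hex]
      exact hex.choose_spec.2
    have hFinj : Set.InjOn F ↑T'' := by
      intro e1 he1 e2 he2 h
      rw [← hFmap e1 (Finset.mem_coe.1 he1), ← hFmap e2 (Finset.mem_coe.1 he2), h]
    have hsum1 : ∑ e' ∈ T'', quotCost u sd e' ≤ ∑ e' ∈ T'', u (F e') := by
      apply Finset.sum_le_sum
      intro e' he'
      conv_lhs => rw [← hFmap e' he']
      exact quotCost_map_le' sd hu (F e')
    set T0 := T''.image F with hT0def
    have hsum2 : ∑ e' ∈ T'', u (F e') = ∑ e ∈ T0, u e :=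
      (Finset.sum_image (fun e1 h1 e2 h2 h =>
        hFinj (Finset.mem_coe.2 h1) (Finset.mem_coe.2 h2) h)).symm
    have hT0sub : T0 ⊆ T := by
      intro e he
      obtain ⟨e', he', rfl⟩ := Finset.mem_image.1 he
      exact hFmem e' he'
    have hT0card : T0.card < T.card := by
      rw [hT0def, Finset.card_image_of_injOn hFinj]
      omega
    obtain ⟨f0, hf0T, hf0T0⟩ := Finset.exists_of_ssubset
      (lt_of_le_of_ne hT0sub (fun h => by rw [h] at hT0card; omega))
    have hf0t0 : t0 ≤ u f0 := by
      obtain ⟨a, b, rfl⟩ := sym2_exists_rep f0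
      have : a ≠ b := fun h => hdiag _ hf0T (Sym2.mk_isDiag_iff.2 h)
      exact hmin a b this
    have hsum3 : ∑ e ∈ T0, u e + u f0 ≤ ∑ e ∈ T, u e := by
      have hsub : T0 ⊆ T.erase f0 := fun e he =>
        Finset.mem_erase.2 ⟨fun h => hf0T0 (h ▸ he), hT0sub he⟩
      calc ∑ e ∈ T0, u e + u f0
          ≤ ∑ e ∈ T.erase f0, u e + u f0 := by
            have := Finset.sum_le_sum_of_subset_of_nonneg hsub (fun e _ _ => hu e)
            linarith
        _ = ∑ e ∈ T, u e := Finset.sum_erase_add T u hf0T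
    have hmst : mstCost (quotCost u sd) ≤ ∑ e' ∈ T'', quotCost u sd e' :=
      csInf_le (mst_set_bddBelow (quotCost_nonneg sd hu)) ⟨T'', hT''diag, hT''conn, hT''card, rfl⟩
    linarith
lemma mst_eq_integral_aux : ∀ (n : ℕ) (α : Type*) [Finite α] [Nonempty α] (u : Sym2 α → ℝ),
    (∀ e, 0 ≤ u e) → Nat.card α = n →
    mstCost u = ∫ t in Set.Ioi (0:ℝ), nComp (thrG u t) Set.univ := by
  intro n
  induction n using Nat.strong_induction_on with
  | _ n IH =>
    intro α _ _ u hu hn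
    classical
    have hn1 : 1 ≤ Nat.card α := Nat.card_pos
    by_cases hc1 : Nat.card α = 1
    · -- base case
      have hsub : Subsingleton α := (Nat.card_eq_one_iff_unique.1 hc1).1
      have hset : {w : ℝ | ∃ T : Finset (Sym2 α), (∀ e ∈ T, ¬ e.IsDiag) ∧
          (SimpleGraph.fromEdgeSet (↑T : Set (Sym2 α))).Connected ∧
          T.card + 1 = Nat.card α ∧ w = ∑ e ∈ T, u e} = {0} := by
        ext w
        constructor
        · rintro ⟨T, _, _, hcardT, rfl⟩
          have : T.card = 0 := by omega
          rw [Finset.card_eq_zero.1 this]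
          simp
        · rintro rfl
          refine ⟨∅, by simp, ?_, by simp [hc1], by simp⟩
          rw [Finset.coe_empty, SimpleGraph.fromEdgeSet_empty]
          exact ⟨fun a b => by rw [Subsingleton.elim a b]⟩
      have hint : ∀ t : ℝ, nComp (thrG u t) Set.univ = 0 := by
        intro t
        have himg : (thrG u t).connectedComponentMk '' Set.univ
            = {(thrG u t).connectedComponentMk (Classical.arbitrary α)} := by
          apply subset_antisymm
          · rintro _ ⟨a, _, rfl⟩
            rw [Subsingleton.elim a (Classical.arbitrary α)]
            exact rfl
          · rintro _ rfl
            exact ⟨_, Set.mem_univ _, rfl⟩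
        simp [nComp, himg]
      have : ∫ t in Set.Ioi (0:ℝ), nComp (thrG u t) Set.univ
          = ∫ _ in Set.Ioi (0:ℝ), (0:ℝ) :=
        setIntegral_congr_fun measurableSet_Ioi (fun t _ => hint t)
      rw [mstCost, hset, csInf_singleton, this, integral_zero]
    · -- inductive step
      have hn2 : 2 ≤ Nat.card α := by omega
      haveI : Nontrivial α := by
        letI := Fintype.ofFinite α
        exact Fintype.one_lt_card_iff_nontrivial.1 (by rw [← Nat.card_eq_fintype_card]; omega)
      set E : Set ℝ := {v | ∃ a b : α, a ≠ b ∧ v = u s(a, b)} with hEdef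
      have hEne : E.Nonempty := by
        obtain ⟨x1, y1, hxy1⟩ := exists_pair_ne α
        exact ⟨u s(x1, y1), x1, y1, hxy1, rfl⟩
      have hEfin : E.Finite := by
        apply (Set.finite_range u).subset
        rintro v ⟨a, b, _, rfl⟩
        exact ⟨s(a, b), rfl⟩
      obtain ⟨x0, y0, hxy, ht0eq⟩ := hEne.csInf_mem hEfin
      have hmin : ∀ a b : α, a ≠ b → u s(x0, y0) ≤ u s(a, b) := by
        intro a b hab
        rw [← ht0eq]
        refine csInf_le ⟨0, ?_⟩ ⟨a, b, hab, rfl⟩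
        rintro v ⟨a', b', _, rfl⟩
        exact hu _
      set t0 := u s(x0, y0) with ht0def
      have ht0nn : 0 ≤ t0 := hu _
      set P : Set α := {x0, y0} with hPdef
      haveI hQne : Nonempty (Quotient (contractSetoid P)) :=
        ⟨Quotient.mk (contractSetoid P) x0⟩
      have hcardQ : Nat.card (Quotient (contractSetoid P)) + 1 = Nat.card α :=
        card_quotient_pair hxy
      have hu' := quotCost_nonneg (contractSetoid P) hu
      have key : mstCost u = t0 + mstCost (quotCost u (contractSetoid P)) :=
        mst_contract_pair u hu hxy hmin
      have hIH : mstCost (quotCost u (contractSetoid P))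
          = ∫ t in Set.Ioi (0:ℝ), nComp (thrG (quotCost u (contractSetoid P)) t) Set.univ :=
        IH (Nat.card (Quotient (contractSetoid P))) (by omega) _ _ hu' rfl
      have hconv : ∀ t : ℝ, nComp (thrG (quotCost u (contractSetoid P)) t) Set.univ
          = nComp (thrG u t ⊔ cliqueOn P) Set.univ := by
        intro t
        have h := nComp_quot hu P t Set.univ
        rwa [mk_image_univ] at h
      have hIH' : mstCost (quotCost u (contractSetoid P))
          = ∫ t in Set.Ioi (0:ℝ), nComp (thrG u t ⊔ cliqueOn P) Set.univ := by
        rw [hIH]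
        exact setIntegral_congr_fun measurableSet_Ioi (fun t _ => hconv t)
      -- integral analysis
      have hintA : IntegrableOn (fun t => nComp (thrG u t) Set.univ) (Set.Ioi (0:ℝ)) := by
        have h := nComp_integrableOn u ⊥ (Set.univ_nonempty (α := α))
        simp only [sup_bot_eq] at h
        exact h
      have hintB : IntegrableOn (fun t => nComp (thrG u t ⊔ cliqueOn P) Set.univ)
          (Set.Ioi (0:ℝ)) := nComp_integrableOn u (cliqueOn P) Set.univ_nonempty
      have hdisj : Disjoint (Set.Ioc (0:ℝ) t0) (Set.Ioi t0) :=
        Set.disjoint_left.2 (fun t ht ht' => absurd ht.2 (not_le.2 ht'))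
      have hsplit : ∀ {f : ℝ → ℝ}, IntegrableOn f (Set.Ioi (0:ℝ)) →
          ∫ t in Set.Ioi (0:ℝ), f t
            = (∫ t in Set.Ioc (0:ℝ) t0, f t) + ∫ t in Set.Ioi t0, f t := by
        intro f hf
        rw [← setIntegral_union hdisj measurableSet_Ioi
          (hf.mono_set Set.Ioc_subset_Ioi_self) (hf.mono_set (Set.Ioi_subset_Ioi ht0nn)),
          Set.Ioc_union_Ioi_eq_Ioi ht0nn]
      have hA_small : ∀ t ∈ Set.Ioc (0:ℝ) t0,
          nComp (thrG u t) Set.univ = (Nat.card α : ℝ) - 1 := by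
        intro t ht
        rw [thrG_eq_bot (fun a b hab => le_trans ht.2 (hmin a b hab)), nComp_bot]
      have hB_small : ∀ t ∈ Set.Ioc (0:ℝ) t0,
          nComp (thrG u t ⊔ cliqueOn P) Set.univ
            = (Nat.card (Quotient (contractSetoid P)) : ℝ) - 1 := by
        intro t ht
        rw [thrG_eq_bot (fun a b hab => le_trans ht.2 (hmin a b hab)), nComp_bot_clique]
      have hAB : ∀ t ∈ Set.Ioi t0,
          nComp (thrG u t) Set.univ = nComp (thrG u t ⊔ cliqueOn P) Set.univ := by
        intro t ht
        have hle : cliqueOn P ≤ thrG u t := by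
          rintro a b ⟨hne, ha, hb⟩
          have hsab : u s(a, b) = t0 := by
            simp only [hPdef, Set.mem_insert_iff, Set.mem_singleton_iff] at ha hb
            rcases ha with rfl | rfl <;> rcases hb with rfl | rfl
            · exact absurd rfl hne
            · rfl
            · rw [Sym2.eq_swap]
            · exact absurd rfl hne
          rw [thrG_adj, hsab]
          exact ⟨ht, hne⟩
        rw [sup_eq_left.2 hle]
      have hIoc_vol : (volume (Set.Ioc (0:ℝ) t0)).toReal = t0 := by
        rw [Real.volume_Ioc, sub_zero, ENNReal.toReal_ofReal ht0nn]
      have e1 : ∫ t in Set.Ioc (0:ℝ) t0, nComp (thrG u t) Set.univ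
          = t0 * ((Nat.card α : ℝ) - 1) := by
        rw [setIntegral_congr_fun measurableSet_Ioc hA_small, setIntegral_const, measureReal_def, hIoc_vol,
          smul_eq_mul]
      have e2 : ∫ t in Set.Ioc (0:ℝ) t0, nComp (thrG u t ⊔ cliqueOn P) Set.univ
          = t0 * ((Nat.card (Quotient (contractSetoid P)) : ℝ) - 1) := by
        rw [setIntegral_congr_fun measurableSet_Ioc hB_small, setIntegral_const, measureReal_def, hIoc_vol,
          smul_eq_mul]
      have e3 : ∫ t in Set.Ioi t0, nComp (thrG u t) Set.univ
          = ∫ t in Set.Ioi t0, nComp (thrG u t ⊔ cliqueOn P) Set.univ :=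
        setIntegral_congr_fun measurableSet_Ioi hAB
      have hcastQ : (Nat.card α : ℝ) = (Nat.card (Quotient (contractSetoid P)) : ℝ) + 1 := by
        exact_mod_cast hcardQ.symm
      rw [key, hIH', hsplit hintA, hsplit hintB, e1, e2, e3, hcastQ]
      ring
lemma mst_formula {R : Type*} [Finite R] [Nonempty R] (u : Sym2 R → ℝ) (hu : ∀ e, 0 ≤ u e) :
    mstCost u = ∫ t in Set.Ioi (0:ℝ), nComp (thrG u t) Set.univ :=
  mst_eq_integral_aux (Nat.card R) R u hu rfl

lemma mst_quot_formula {R : Type*} [Finite R] [Nonempty R] (u : Sym2 R → ℝ)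
    (hu : ∀ e, 0 ≤ u e) (W : Set R) :
    mstCost (quotCost u (contractSetoid W))
      = ∫ t in Set.Ioi (0:ℝ), nComp (thrG u t ⊔ cliqueOn W) Set.univ := by
  haveI : Nonempty (Quotient (contractSetoid W)) :=
    ⟨Quotient.mk (contractSetoid W) (Classical.arbitrary R)⟩
  rw [mst_eq_integral_aux (Nat.card (Quotient (contractSetoid W))) _ _
    (quotCost_nonneg _ hu) rfl]
  apply setIntegral_congr_fun measurableSet_Ioi
  intro t _
  have h := nComp_quot hu W t Set.univ
  rwa [mk_image_univ] at h

lemma drop_integrand {R : Type*} [Finite R] (G : SimpleGraph R) {X : Set R} (hX : X.Nonempty) :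
    nComp G Set.univ - nComp (G ⊔ cliqueOn X) Set.univ = nComp G X := by
  have h := count_sup_clique G hX
  have h' := congrArg (Nat.cast : ℕ → ℝ) h
  push_cast at h'
  unfold nComp
  linarith

lemma dropCost_formula {R : Type*} [Finite R] [Nonempty R] (u : Sym2 R → ℝ)
    (hu : ∀ e, 0 ≤ u e) {X : Set R} (hX : X.Nonempty) :
    dropCost u X = ∫ t in Set.Ioi (0:ℝ), nComp (thrG u t) X := by
  have hintA : IntegrableOn (fun t => nComp (thrG u t) Set.univ) (Set.Ioi (0:ℝ)) := by
    have h := nComp_integrableOn u ⊥ (Set.univ_nonempty (α := R))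
    simp only [sup_bot_eq] at h
    exact h
  have hintB : IntegrableOn (fun t => nComp (thrG u t ⊔ cliqueOn X) Set.univ)
      (Set.Ioi (0:ℝ)) := nComp_integrableOn u (cliqueOn X) Set.univ_nonempty
  rw [dropCost, mst_formula u hu, mst_quot_formula u hu X, ← integral_sub hintA hintB]
  apply setIntegral_congr_fun measurableSet_Ioi
  intro t _
  exact drop_integrand (thrG u t) hX

lemma dropCost_quot_formula {R : Type*} [Finite R] [Nonempty R] (u : Sym2 R → ℝ)
    (hu : ∀ e, 0 ≤ u e) (Y : Set R) {X : Set R} (hX : X.Nonempty) :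
    dropCost (quotCost u (contractSetoid Y)) (Quotient.mk (contractSetoid Y) '' X)
      = ∫ t in Set.Ioi (0:ℝ), nComp (thrG u t ⊔ cliqueOn Y) X := by
  haveI : Nonempty (Quotient (contractSetoid Y)) :=
    ⟨Quotient.mk (contractSetoid Y) (Classical.arbitrary R)⟩
  have h2 : mstCost (quotCost (quotCost u (contractSetoid Y))
      (contractSetoid (Quotient.mk (contractSetoid Y) '' X)))
      = ∫ t in Set.Ioi (0:ℝ), nComp (thrG u t ⊔ cliqueOn Y ⊔ cliqueOn X) Set.univ := by
    rw [mst_quot_formula _ (quotCost_nonneg _ hu) _]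
    apply setIntegral_congr_fun measurableSet_Ioi
    intro t _
    have h := nComp_quot2 hu Y X t Set.univ
    rwa [mk_image_univ] at h
  have hint1 : IntegrableOn (fun t => nComp (thrG u t ⊔ cliqueOn Y) Set.univ)
      (Set.Ioi (0:ℝ)) := nComp_integrableOn u (cliqueOn Y) Set.univ_nonempty
  have hint2 : IntegrableOn (fun t => nComp (thrG u t ⊔ cliqueOn Y ⊔ cliqueOn X) Set.univ)
      (Set.Ioi (0:ℝ)) := by
    have h := nComp_integrableOn u (cliqueOn Y ⊔ cliqueOn X) (Set.univ_nonempty (α := R))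
    simp only [← sup_assoc] at h
    exact h
  rw [dropCost, mst_quot_formula u hu Y, h2, ← integral_sub hint1 hint2]
  apply setIntegral_congr_fun measurableSet_Ioi
  intro t _
  exact drop_integrand (thrG u t ⊔ cliqueOn Y) hX

lemma dropCost_empty {R : Type*} [Finite R] [Nonempty R] (u : Sym2 R → ℝ)
    (hu : ∀ e, 0 ≤ u e) : dropCost u (∅ : Set R) = 0 := by
  rw [dropCost, mst_formula u hu, mst_quot_formula u hu ∅]
  simp only [cliqueOn_empty, sup_bot_eq, sub_self]

lemma mst_empty {R : Type*} [IsEmpty R] (u : Sym2 R → ℝ) : mstCost u = 0 := by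
  have hset : {w : ℝ | ∃ T : Finset (Sym2 R), (∀ e ∈ T, ¬ e.IsDiag) ∧
      (SimpleGraph.fromEdgeSet (↑T : Set (Sym2 R))).Connected ∧
      T.card + 1 = Nat.card R ∧ w = ∑ e ∈ T, u e} = ∅ := by
    rw [Set.eq_empty_iff_forall_notMem]
    rintro w ⟨T, _, _, hcard, _⟩
    rw [Nat.card_of_isEmpty] at hcard
    omega
  rw [mstCost, hset, Real.sInf_empty]

theorem part_two {R : Type*} [Finite R] (d : Sym2 R → ℝ) (hd : ∀ e, 0 ≤ d e) (X Y : Set R) :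
    dropCost (quotCost d (contractSetoid Y)) (Quotient.mk (contractSetoid Y) '' X)
      ≤ dropCost d X := by
  classical
  cases isEmpty_or_nonempty R with
  | inl h =>
    haveI : IsEmpty (Quotient (contractSetoid Y)) := ⟨fun q => Quotient.ind (motive := fun _ => False) isEmptyElim q⟩
    haveI : IsEmpty (Quotient (contractSetoid (Quotient.mk (contractSetoid Y) '' X))) :=
      ⟨fun q => Quotient.ind (motive := fun _ => False) isEmptyElim q⟩
    haveI : IsEmpty (Quotient (contractSetoid X)) := ⟨fun q => Quotient.ind (motive := fun _ => False) isEmptyElim q⟩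
    rw [dropCost, dropCost, mst_empty, mst_empty, mst_empty, mst_empty]
  | inr h =>
    rcases X.eq_empty_or_nonempty with rfl | hX
    · haveI : Nonempty (Quotient (contractSetoid Y)) :=
        ⟨Quotient.mk (contractSetoid Y) (Classical.arbitrary R)⟩
      rw [Set.image_empty, dropCost_empty _ (quotCost_nonneg _ hd), dropCost_empty d hd]
    · rw [dropCost_formula d hd hX, dropCost_quot_formula d hd Y hX]
      have hint1 : IntegrableOn (fun t => nComp (thrG d t ⊔ cliqueOn Y) X)
          (Set.Ioi (0:ℝ)) := nComp_integrableOn d (cliqueOn Y) hX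
      have hint2 : IntegrableOn (fun t => nComp (thrG d t) X) (Set.Ioi (0:ℝ)) := by
        have h := nComp_integrableOn d ⊥ hX
        simp only [sup_bot_eq] at h
        exact h
      apply setIntegral_mono_on hint1 hint2 measurableSet_Ioi
      intro t _
      exact nComp_mono le_sup_left X
/-- (i) For any merge plan `M` on `R`, any contraction set `Y ⊆ R`,
and the contracted merge plan `M/Y` on `R/Y` (whose partition at each time arises from
that of `M` by combining all parts intersecting `Y`), the local value of any nonempty
`X ⊆ R` can only decrease: `value(M/Y, X) ≤ value(M, X)`.
(ii) Consequently, for terminal metrics, `drop_{G/Y}(X) ≤ drop_G(X)`. -/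
theorem localValue_contract_le_and_drop_contract_le {R : Type*} [Fintype R] :
    (∀ (M : MergePlan R) (Y : Set R)
      (M' : MergePlan (Quotient (contractSetoid Y))),
      (∀ t : ℝ, 0 ≤ t → ∀ a b : R,
        ((M'.rel t).r (Quotient.mk (contractSetoid Y) a) (Quotient.mk (contractSetoid Y) b) ↔
          ((M.rel t).r a b ∨
            ((∃ y ∈ Y, (M.rel t).r a y) ∧ (∃ y ∈ Y, (M.rel t).r y b))))) →
      ∀ X : Set R, X.Nonempty →
        M'.localValue (Quotient.mk (contractSetoid Y) '' X) ≤ M.localValue X) ∧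
    (∀ (d : Sym2 R → ℝ), (∀ e, 0 ≤ d e) → ∀ (X Y : Set R),
      dropCost (quotCost d (contractSetoid Y)) (Quotient.mk (contractSetoid Y) '' X) ≤
        dropCost d X) := by
  constructor
  · exact fun M Y M' hM' X hX => part_one M Y M' hM' X hX
  · exact fun d hd X Y => part_two d hd X Y
end

section
/- Let M1 and M2 be merge plans on R, X ⊆ R a nonempty terminal set, and α ≥ 0. If merge_{M1}(x,y) ≤ α · merge_{M2}(x,y) for all x,y ∈ X, then value(M1, X) ≤ α · value(M2, X). -/
open MeasureTheory

/-- Counting classes by counting class-minima. -/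
private lemma quot_card_eq {R : Type*} (S : Setoid R) (s : Finset R)
    (e : R → ℕ) (he : Function.Injective e) [DecidableEq R]
    [DecidableEq (Quotient S)]
    [DecidablePred fun x => ∀ y ∈ s, e y < e x → ¬ S.r x y] :
    (s.image (Quotient.mk S)).card
      = (s.filter (fun x => ∀ y ∈ s, e y < e x → ¬ S.r x y)).card := by
  classical
  set F := s.filter (fun x => ∀ y ∈ s, e y < e x → ¬ S.r x y) with hF
  have himg : s.image (Quotient.mk S) = F.image (Quotient.mk S) := by
    apply Finset.Subset.antisymm
    · intro q hq
      simp only [Finset.mem_image] at hq ⊢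
      obtain ⟨x, hx, rfl⟩ := hq
      obtain ⟨z, hz, hzmin⟩ :=
        (s.filter (fun y => S.r x y)).exists_min_image e
          ⟨x, Finset.mem_filter.2 ⟨hx, S.refl x⟩⟩
      simp only [Finset.mem_filter] at hz
      refine ⟨z, ?_, Quotient.sound (S.symm hz.2)⟩
      simp only [hF, Finset.mem_filter]
      refine ⟨hz.1, fun y hy hlt hrel => ?_⟩
      have hy' : y ∈ s.filter (fun y => S.r x y) := by
        simp only [Finset.mem_filter]
        exact ⟨hy, S.trans hz.2 hrel⟩
      exact absurd (hzmin y hy') (not_le.2 hlt)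
    · exact Finset.image_subset_image (Finset.filter_subset _ _)
  rw [himg]
  apply Finset.card_image_of_injOn
  intro x hx x' hx' hq
  simp only [hF, Finset.mem_coe, Finset.mem_filter] at hx hx'
  have hrel : S.r x x' := Quotient.exact hq
  by_contra hne
  rcases lt_or_gt_of_ne (fun h : e x = e x' => hne (he h)) with hlt | hlt
  · exact hx'.2 x hx.1 hlt (S.symm hrel)
  · exact hx.2 x' hx'.1 hlt hrel

private lemma localValue_eq_sum {R : Type*} [Fintype R] [DecidableEq R] (M : MergePlan R)
    (X : Set R) (s : Finset R) (hs : ↑s = X)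
    (e : R → ℕ) (he : Function.Injective e)
    (x₀ : R) (hx₀ : x₀ ∈ s) (hmin : ∀ y ∈ s, e x₀ ≤ e y) :
    M.localValue X = ∑ x ∈ s.erase x₀,
      sInf (M.mergeTime x '' {y ∈ X | e y < e x}) := by
  classical
  set m : R → ℝ := fun x => sInf (M.mergeTime x '' {y ∈ X | e y < e x}) with hm
  -- basic facts for x in the erase set
  have hYne : ∀ x ∈ s.erase x₀, ({y ∈ X | e y < e x}).Nonempty := by
    intro x hx
    refine ⟨x₀, ?_, ?_⟩
    · rw [← hs]; exact hx₀
    · exact lt_of_le_of_ne (hmin x (Finset.mem_of_mem_erase hx))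
        (fun hxy => (Finset.ne_of_mem_erase hx) (he hxy.symm))
  have hle_iff : ∀ x ∈ s.erase x₀, ∀ t : ℝ,
      (t ≤ m x ↔ ∀ y ∈ X, e y < e x → t ≤ M.mergeTime x y) := by
    intro x hx t
    rw [hm, le_csInf_iff ((Set.toFinite _).image _).bddBelow
      ((hYne x hx).image _)]
    constructor
    · intro H y hy hlt
      exact H _ ⟨y, ⟨hy, hlt⟩, rfl⟩
    · rintro H b ⟨y, ⟨hy, hlt⟩, rfl⟩
      exact H y hy hlt
  have hm_nonneg : ∀ x ∈ s.erase x₀, 0 ≤ m x := by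
    intro x hx
    rw [hle_iff x hx 0]
    intro y hy hlt
    exact M.mergeTime_nonneg x y (fun hxy => lt_irrefl _ (hxy ▸ hlt))
  -- pointwise identity on Ioi 0
  have hpt : ∀ t ∈ Set.Ioi (0:ℝ),
      ((Set.ncard (Quotient.mk (M.rel t) '' X) : ℝ) - 1)
        = ∑ x ∈ s.erase x₀, (Set.Ioc 0 (m x)).indicator (fun _ => (1:ℝ)) t := by
    intro t ht
    have ht : (0:ℝ) < t := ht
    have hcard : Set.ncard (Quotient.mk (M.rel t) '' X)
        = (s.filter (fun x => ∀ y ∈ s, e y < e x → ¬ (M.rel t).r x y)).card := by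
      rw [← hs, ← Finset.coe_image, Set.ncard_coe_finset]
      exact quot_card_eq (M.rel t) s e he
    have hFeq : s.filter (fun x => ∀ y ∈ s, e y < e x → ¬ (M.rel t).r x y)
        = insert x₀ ((s.erase x₀).filter (fun x => t ≤ m x)) := by
      ext x
      simp only [Finset.mem_filter, Finset.mem_insert, Finset.mem_erase]
      constructor
      · rintro ⟨hxs, hcond⟩
        by_cases hx : x = x₀
        · exact Or.inl hx
        · refine Or.inr ⟨⟨hx, hxs⟩, ?_⟩
          have hxe : x ∈ s.erase x₀ := Finset.mem_erase.2 ⟨hx, hxs⟩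
          rw [hle_iff x hxe t]
          intro y hy hlt
          have hys : y ∈ s := by rw [← hs] at hy; exact hy
          have hne : x ≠ y := fun hxy => lt_irrefl _ (hxy ▸ hlt)
          exact ((M.rel_iff t x y hne).1 (hcond y hys hlt)).2
      · rintro (rfl | ⟨⟨hne, hxs⟩, hmx⟩)
        · exact ⟨hx₀, fun y hy hlt _ => absurd (hmin y hy) (not_le.2 hlt)⟩
        · refine ⟨hxs, fun y hy hlt hrel => ?_⟩
          have hxe : x ∈ s.erase x₀ := Finset.mem_erase.2 ⟨hne, hxs⟩
          have hne' : x ≠ y := fun hxy => lt_irrefl _ (hxy ▸ hlt)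
          have hyX : y ∈ X := by rw [← hs]; exact hy
          have := (hle_iff x hxe t).1 hmx y hyX hlt
          exact (M.rel_iff t x y hne').2 ⟨le_of_lt ht, this⟩ hrel
    have hx₀notmem : x₀ ∉ (s.erase x₀).filter (fun x => t ≤ m x) :=
      fun hmem => (Finset.notMem_erase x₀ s) (Finset.mem_of_mem_filter _ hmem)
    have hsum : ∑ x ∈ s.erase x₀, (Set.Ioc 0 (m x)).indicator (fun _ => (1:ℝ)) t
        = (((s.erase x₀).filter (fun x => t ≤ m x)).card : ℝ) := by
      rw [Finset.card_filter]
      push_cast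
      apply Finset.sum_congr rfl
      intro x hx
      by_cases hmx : t ≤ m x <;>
        simp [Set.indicator_apply, Set.mem_Ioc, ht, hmx]
    rw [hcard, hFeq, Finset.card_insert_of_notMem hx₀notmem, hsum]
    push_cast
    ring
  -- integrate
  rw [MergePlan.localValue, setIntegral_congr_fun measurableSet_Ioi hpt]
  have hint : ∀ x ∈ s.erase x₀,
      Integrable (fun t => (Set.Ioc 0 (m x)).indicator (fun _ => (1:ℝ)) t)
        (volume.restrict (Set.Ioi (0:ℝ))) := by
    intro x _
    refine Integrable.integrableOn ?_
    rw [integrable_indicator_iff measurableSet_Ioc]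
    exact integrableOn_const measure_Ioc_lt_top.ne
  rw [integral_finset_sum _ hint]
  apply Finset.sum_congr rfl
  intro x hx
  rw [setIntegral_indicator measurableSet_Ioc,
    Set.inter_eq_self_of_subset_right Set.Ioc_subset_Ioi_self, setIntegral_const,
    Real.volume_real_Ioc_of_le (hm_nonneg x hx), sub_zero, smul_eq_mul, mul_one]

/-- If `merge_{M1}(x,y) ≤ α · merge_{M2}(x,y)` for all distinct
`x, y ∈ X`, then `value(M1, X) ≤ α · value(M2, X)`. -/
theorem localValue_le_of_mergeTime_le {R : Type*} [Fintype R]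
    (M1 M2 : MergePlan R) (X : Set R) (hX : X.Nonempty)
    (α : ℝ) (hα : 0 ≤ α)
    (h : ∀ x ∈ X, ∀ y ∈ X, x ≠ y → M1.mergeTime x y ≤ α * M2.mergeTime x y) :
    M1.localValue X ≤ α * M2.localValue X := by
  classical
  set s : Finset R := (Set.toFinite X).toFinset with hs_def
  have hs : ↑s = X := (Set.toFinite X).coe_toFinset
  have hsne : s.Nonempty := by
    obtain ⟨x, hx⟩ := hX
    exact ⟨x, by rw [← Finset.mem_coe, hs]; exact hx⟩
  set e : R → ℕ := fun x => (Fintype.equivFin R x : ℕ) with he_def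
  have he : Function.Injective e :=
    Fin.val_injective.comp (Fintype.equivFin R).injective
  obtain ⟨x₀, hx₀, hmin⟩ := s.exists_min_image e hsne
  rw [localValue_eq_sum M1 X s hs e he x₀ hx₀ hmin,
    localValue_eq_sum M2 X s hs e he x₀ hx₀ hmin, Finset.mul_sum]
  apply Finset.sum_le_sum
  intro x hx
  have hxs : x ∈ s := Finset.mem_of_mem_erase hx
  have hxX : x ∈ X := by rw [← hs]; exact hxs
  have hxne : x ≠ x₀ := Finset.ne_of_mem_erase hx
  have hYne : ({y ∈ X | e y < e x}).Nonempty := by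
    refine ⟨x₀, ?_, lt_of_le_of_ne (hmin x hxs) (fun hxy => hxne (he hxy.symm))⟩
    rw [← hs]; exact hx₀
  have hmem : sInf (M2.mergeTime x '' {y ∈ X | e y < e x})
      ∈ M2.mergeTime x '' {y ∈ X | e y < e x} :=
    (hYne.image _).csInf_mem ((Set.toFinite _).image _)
  obtain ⟨y, hyY, hy⟩ := hmem
  have hxy : x ≠ y := fun hxy => lt_irrefl _ (hxy ▸ hyY.2)
  calc sInf (M1.mergeTime x '' {y ∈ X | e y < e x})
      ≤ M1.mergeTime x y :=
        csInf_le ((Set.toFinite _).image _).bddBelow ⟨y, hyY, rfl⟩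
    _ ≤ α * M2.mergeTime x y := h x hxX y hyY.1 hxy
    _ = α * sInf (M2.mergeTime x '' {y ∈ X | e y < e x}) := by rw [hy]
end

section
/- Every improving component contains a full improving component. Precisely: let (G,c,R) be a Steiner tree instance and K a component connecting terminal set X with c(K) < drop_G(X). Decompose K into its maximal full components K_1,…,K_k connecting terminal sets X_1,…,X_k. Then there exists i with c(K_i) < drop_G(X_i). -/
/-- Shortest-path distance in the weighted graph `(G, c)`, as a function on unordered pairs. -/
noncomputable def wdist {V : Type*} (G : SimpleGraph V) (c : Sym2 V → ℝ) : Sym2 V → ℝ :=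
  Sym2.lift ⟨fun x y => sInf {d : ℝ |
      (∃ p : G.Walk x y, d = (p.edges.map c).sum) ∨
      (∃ p : G.Walk y x, d = (p.edges.map c).sum)},
    fun x y => congrArg sInf (Set.ext fun _ => or_comm)⟩

/-- The metric closure of `(G, c)` restricted to a terminal set `R`. -/
noncomputable def restrictDist {V : Type*} (G : SimpleGraph V) (c : Sym2 V → ℝ)
    (R : Finset V) : Sym2 {v : V // v ∈ R} → ℝ :=
  Sym2.lift ⟨fun a b => wdist G c s((a : V), (b : V)), fun a b => by show wdist G c s((a : V), (b : V)) = wdist G c s((b : V), (a : V)); rw [Sym2.eq_swap]⟩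
/-- The edge set `K` connects the vertex set `X`: all of `X` lies in a single
connected component of the graph with edge set `K`. -/
def ConnectsSet {V : Type*} (K : Set (Sym2 V)) (X : Set V) : Prop :=
  ∀ x ∈ X, ∀ y ∈ X, (SimpleGraph.fromEdgeSet K).Reachable x y

/-- The minimum cost of a component (edge set of `G`) connecting the vertex set `X`. -/
noncomputable def connCost {V : Type*} (G : SimpleGraph V) (c : Sym2 V → ℝ)
    (X : Set V) : ℝ :=
  sInf {w : ℝ | ∃ K : Finset (Sym2 V), (↑K : Set (Sym2 V)) ⊆ G.edgeSet ∧
    ConnectsSet (↑K : Set (Sym2 V)) X ∧ w = ∑ e ∈ K, c e}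
/-- `K` is a full component of `(G, R)`: an edge set of `G` forming a tree
whose leaves are exactly the terminals among its vertices (internal vertices
are Steiner vertices). -/
def IsFullComponent {V : Type*} (G : SimpleGraph V) (R : Finset V)
    (K : Finset (Sym2 V)) : Prop :=
  (↑K : Set (Sym2 V)) ⊆ G.edgeSet ∧
  (∀ x y : V, (∃ e ∈ K, x ∈ e) → (∃ e ∈ K, y ∈ e) →
    (SimpleGraph.fromEdgeSet (↑K : Set (Sym2 V))).Reachable x y) ∧
  K.card + 1 = Set.ncard {v : V | ∃ e ∈ K, v ∈ e} ∧
  (∀ v : V, (∃ e ∈ K, v ∈ e) →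
    (v ∈ R ↔ Set.ncard {e : Sym2 V | e ∈ K ∧ v ∈ e} = 1))



section Comp

open SimpleGraph

variable {V : Type*}

/-- Number of connected components. -/
noncomputable def ncomp (G : SimpleGraph V) : ℕ := Nat.card G.ConnectedComponent

lemma ncomp_le_of_le [Finite V] {G G' : SimpleGraph V} (h : G ≤ G') : ncomp G' ≤ ncomp G := by
  haveI : Finite G.ConnectedComponent := Quot.finite _
  apply Nat.card_le_card_of_surjective
    (fun c => c.map (SimpleGraph.Hom.ofLE h))
  intro c'
  refine c'.ind (fun v => ⟨G.connectedComponentMk v, rfl⟩)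

lemma ncomp_congr {G G' : SimpleGraph V}
    (h : ∀ u v, G.Reachable u v ↔ G'.Reachable u v) : ncomp G = ncomp G' := by
  refine Nat.card_eq_of_bijective
    (SimpleGraph.ConnectedComponent.lift (fun v => G'.connectedComponentMk v)
      (fun u v p hp => ConnectedComponent.sound ((h u v).1 p.reachable))) ⟨?_, ?_⟩
  · intro c d
    refine SimpleGraph.ConnectedComponent.ind₂ (fun a b hab => ?_) c d
    simp only [ConnectedComponent.lift_mk] at hab
    exact ConnectedComponent.sound ((h a b).2 (ConnectedComponent.exact hab))
  · intro c'
    refine c'.ind (fun v => ⟨G.connectedComponentMk v, rfl⟩)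

lemma reachable_sup_edge {G : SimpleGraph V} {x y u v : V}
    (w : (G ⊔ edge x y).Walk u v) :
    G.Reachable u v ∨ (G.Reachable u x ∧ G.Reachable y v) ∨
      (G.Reachable u y ∧ G.Reachable x v) := by
  induction w with
  | nil => exact Or.inl (Reachable.refl _)
  | @cons a m b h p ih =>
    rcases h with h | h
    · have r : G.Reachable a m := h.reachable
      rcases ih with q | ⟨q1, q2⟩ | ⟨q1, q2⟩
      · exact Or.inl (r.trans q)
      · exact Or.inr (Or.inl ⟨r.trans q1, q2⟩)
      · exact Or.inr (Or.inr ⟨r.trans q1, q2⟩)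
    · rw [edge_adj] at h
      obtain ⟨(⟨rfl, rfl⟩ | ⟨rfl, rfl⟩), hne⟩ := h
      · rcases ih with q | ⟨q1, q2⟩ | ⟨q1, q2⟩
        · exact Or.inr (Or.inl ⟨Reachable.refl _, q⟩)
        · exact Or.inl (q1.symm.trans q2)
        · exact Or.inl q2
      · rcases ih with q | ⟨q1, q2⟩ | ⟨q1, q2⟩
        · exact Or.inr (Or.inr ⟨Reachable.refl _, q⟩)
        · exact Or.inl q2
        · exact Or.inl (q1.symm.trans q2)

lemma ncomp_sup_edge_of_reachable {G : SimpleGraph V} {x y : V}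
    (h : G.Reachable x y) : ncomp (G ⊔ edge x y) = ncomp G := by
  refine ncomp_congr (fun u v => ⟨fun r => ?_, fun r => r.mono le_sup_left⟩)
  obtain ⟨w⟩ := r
  rcases reachable_sup_edge w with q | ⟨q1, q2⟩ | ⟨q1, q2⟩
  · exact q
  · exact (q1.trans h).trans q2
  · exact (q1.trans h.symm).trans q2

lemma ncomp_sup_edge_of_not_reachable [Finite V] {G : SimpleGraph V} {x y : V}
    (hxy : x ≠ y) (h : ¬ G.Reachable x y) :
    ncomp G = ncomp (G ⊔ edge x y) + 1 := by
  classical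
  set G' := G ⊔ edge x y with hG'
  haveI : Finite G.ConnectedComponent := Quot.finite _
  haveI : Finite G'.ConnectedComponent := Quot.finite _
  have hle : G ≤ G' := le_sup_left
  let φ : G.ConnectedComponent → G'.ConnectedComponent :=
    SimpleGraph.ConnectedComponent.lift (fun v => G'.connectedComponentMk v)
      (fun u v p hp => ConnectedComponent.sound ((p.reachable).mono hle))
  have hφ : ∀ v, φ (G.connectedComponentMk v) = G'.connectedComponentMk v := fun _ => rfl
  let f : G.ConnectedComponent → Option G'.ConnectedComponent :=
    fun c => if c = G.connectedComponentMk y then none else some (φ c)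
  have key : ∀ a b, φ (G.connectedComponentMk a) = φ (G.connectedComponentMk b) →
      G.connectedComponentMk a ≠ G.connectedComponentMk y →
      G.connectedComponentMk b ≠ G.connectedComponentMk y →
      G.connectedComponentMk a = G.connectedComponentMk b := by
    intro a b hab ha hb
    rw [hφ, hφ] at hab
    obtain ⟨w⟩ := ConnectedComponent.exact hab
    rcases reachable_sup_edge w with q | ⟨q1, q2⟩ | ⟨q1, q2⟩
    · exact ConnectedComponent.sound q
    · exact absurd (ConnectedComponent.sound q2.symm) hb
    · exact absurd (ConnectedComponent.sound q1) ha
  have hbij : Function.Bijective f := by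
    constructor
    · intro c d hcd
      by_cases hc : c = G.connectedComponentMk y <;>
        by_cases hd : d = G.connectedComponentMk y
      · rw [hc, hd]
      · simp only [f, if_pos hc, if_neg hd] at hcd; exact absurd hcd.symm (Option.some_ne_none _)
      · simp only [f, if_neg hc, if_pos hd] at hcd; exact absurd hcd (Option.some_ne_none _)
      · simp only [f, if_neg hc, if_neg hd, Option.some_inj] at hcd
        refine c.ind₂ (fun a b hab ha hb => key a b hab ha hb) d hcd hc hd
    · intro o
      match o with
      | none => exact ⟨G.connectedComponentMk y, by simp [f]⟩
      | some c' =>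
        refine c'.ind (fun w => ?_)
        by_cases hw : G.connectedComponentMk w = G.connectedComponentMk y
        · refine ⟨G.connectedComponentMk x, ?_⟩
          have hxny : G.connectedComponentMk x ≠ G.connectedComponentMk y := by
            intro hc; exact h (ConnectedComponent.exact hc)
          have adj : G'.Adj x y := by
            right; rw [edge_adj]; exact ⟨Or.inl ⟨rfl, rfl⟩, hxy⟩
          have h1 : G'.connectedComponentMk x = G'.connectedComponentMk w := by
            have h2 : G'.connectedComponentMk w = G'.connectedComponentMk y :=
              ConnectedComponent.sound ((ConnectedComponent.exact hw).mono hle)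
            rw [h2]; exact (ConnectedComponent.sound adj.reachable)
          simp only [f, if_neg hxny, hφ, h1]
        · exact ⟨G.connectedComponentMk w, by simp only [f, if_neg hw, hφ]⟩
  have hcard := Nat.card_eq_of_bijective f hbij
  haveI : Fintype G'.ConnectedComponent := Fintype.ofFinite _
  haveI : Fintype G.ConnectedComponent := Fintype.ofFinite _
  show Nat.card G.ConnectedComponent = Nat.card G'.ConnectedComponent + 1
  rw [Nat.card_eq_fintype_card, Nat.card_eq_fintype_card, Fintype.card_option] at hcard
  rw [Nat.card_eq_fintype_card, Nat.card_eq_fintype_card, hcard]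

end Comp

section Comp2

open SimpleGraph

variable {V : Type*} [Finite V]

lemma ncomp_pos [Nonempty V] (G : SimpleGraph V) : 0 < ncomp G := by
  haveI : Finite G.ConnectedComponent := Quot.finite _
  haveI : Nonempty G.ConnectedComponent := ⟨G.connectedComponentMk (Classical.arbitrary V)⟩
  exact Nat.card_pos

lemma ncomp_le_sup_edge_add_one (G : SimpleGraph V) (x y : V) :
    ncomp G ≤ ncomp (G ⊔ edge x y) + 1 := by
  by_cases hxy : x = y
  · subst hxy; rw [sup_edge_self]; omega
  by_cases h : G.Reachable x y
  · rw [ncomp_sup_edge_of_reachable h]; omega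
  · exact le_of_eq (ncomp_sup_edge_of_not_reachable hxy h)

lemma ncomp_le_fromEdgeSet_sup (G : SimpleGraph V) (B : Finset (Sym2 V)) :
    ncomp G ≤ ncomp (G ⊔ fromEdgeSet (↑B : Set (Sym2 V))) + B.card := by
  classical
  induction B using Finset.induction with
  | empty =>
      rw [Finset.coe_empty, fromEdgeSet_empty, sup_bot_eq, Finset.card_empty]
      omega
  | @insert e B he ih =>
    induction e using Sym2.inductionOn with
    | hf x y =>
      have hset : (↑(insert s(x, y) B) : Set (Sym2 V)) = {s(x, y)} ∪ ↑B := by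
        rw [Finset.coe_insert, Set.insert_eq]
      rw [hset, fromEdgeSet_union, Finset.card_insert_of_notMem he]
      have h1 : G ⊔ (fromEdgeSet {s(x, y)} ⊔ fromEdgeSet ↑B)
          = (G ⊔ fromEdgeSet ↑B) ⊔ edge x y := by
        rw [edge]; rw [sup_comm (fromEdgeSet {s(x,y)}) (fromEdgeSet ↑B), ← sup_assoc]
      rw [h1]
      calc ncomp G ≤ ncomp (G ⊔ fromEdgeSet ↑B) + B.card := ih
        _ ≤ (ncomp ((G ⊔ fromEdgeSet ↑B) ⊔ edge x y) + 1) + B.card := by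
            have := ncomp_le_sup_edge_add_one (G ⊔ fromEdgeSet (↑B : Set (Sym2 V))) x y
            omega
        _ = ncomp ((G ⊔ fromEdgeSet ↑B) ⊔ edge x y) + (B.card + 1) := by omega

lemma ncomp_bot : ncomp (⊥ : SimpleGraph V) = Nat.card V := by
  refine Nat.card_congr ⟨SimpleGraph.ConnectedComponent.lift id
    (fun v w p hp => reachable_bot.mp ⟨p⟩), (⊥ : SimpleGraph V).connectedComponentMk,
    fun c => c.ind (fun v => rfl), fun v => rfl⟩

lemma ncomp_eq_one_of_connected {G : SimpleGraph V} (h : G.Connected) : ncomp G = 1 := by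
  haveI : Finite G.ConnectedComponent := Quot.finite _
  haveI := h.preconnected.subsingleton_connectedComponent
  haveI : Nonempty V := h.nonempty
  haveI : Nonempty G.ConnectedComponent := ⟨G.connectedComponentMk (Classical.arbitrary V)⟩
  rw [ncomp, Nat.card_eq_one_iff_unique]
  exact ⟨inferInstance, inferInstance⟩

lemma reach_of_adj_reach {G B : SimpleGraph V} (h : ∀ a b, B.Adj a b → G.Reachable a b)
    {u v : V} (r : B.Reachable u v) : G.Reachable u v := by
  obtain ⟨w⟩ := r
  induction w with
  | nil => exact Reachable.refl _
  | cons hadj p ih => exact (h _ _ hadj).trans ih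

lemma ncomp_sup_eq_of_reach {G A : SimpleGraph V}
    (h : ∀ a b, A.Adj a b → G.Reachable a b) : ncomp (G ⊔ A) = ncomp G := by
  refine ncomp_congr (fun u v => ⟨fun r => ?_, fun r => r.mono le_sup_left⟩)
  refine reach_of_adj_reach (fun a b hab => ?_) r
  rcases hab with hab | hab
  · exact hab.reachable
  · exact h a b hab

lemma ncomp_submod (C A B : SimpleGraph V) :
    ncomp (C ⊔ A) + ncomp (C ⊔ B) ≤ ncomp C + ncomp (C ⊔ A ⊔ B) := by
  classical
  have main : ∀ s : Finset (Sym2 V),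
      ncomp (C ⊔ fromEdgeSet ↑s) + ncomp (C ⊔ B)
        ≤ ncomp C + ncomp (C ⊔ fromEdgeSet ↑s ⊔ B) := by
    intro s
    induction s using Finset.induction with
    | empty =>
        rw [Finset.coe_empty, fromEdgeSet_empty, sup_bot_eq]
    | @insert e s he ih =>
      induction e using Sym2.inductionOn with
      | hf x y =>
        have hset : (↑(insert s(x, y) s) : Set (Sym2 V)) = {s(x, y)} ∪ ↑s := by
          rw [Finset.coe_insert, Set.insert_eq]
        have h1 : C ⊔ fromEdgeSet ↑(insert s(x, y) s)
            = (C ⊔ fromEdgeSet ↑s) ⊔ edge x y := by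
          rw [hset, fromEdgeSet_union, edge,
            sup_comm (fromEdgeSet {s(x,y)}) (fromEdgeSet ↑s), ← sup_assoc]
        rw [h1, sup_right_comm (C ⊔ fromEdgeSet ↑s) (edge x y) B]
        set G1 := C ⊔ fromEdgeSet (↑s : Set (Sym2 V)) with hG1
        set G2 := G1 ⊔ B with hG2
        by_cases hxy : x = y
        · subst hxy; rw [sup_edge_self, sup_edge_self]; exact ih
        by_cases hr : G2.Reachable x y
        · rw [ncomp_sup_edge_of_reachable hr]
          have h3 : ncomp (G1 ⊔ edge x y) ≤ ncomp G1 := ncomp_le_of_le le_sup_left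
          omega
        · have hr1 : ¬ G1.Reachable x y := fun hc => hr (hc.mono le_sup_left)
          have e1 := ncomp_sup_edge_of_not_reachable hxy hr1
          have e2 := ncomp_sup_edge_of_not_reachable hxy hr
          omega
  have hf : A.edgeSet.Finite := Set.toFinite _
  have := main hf.toFinset
  rwa [Set.Finite.coe_toFinset, fromEdgeSet_edgeSet] at this

end Comp2

section Kruskal

open SimpleGraph Finset

noncomputable def tval (S : Finset ℝ) (j : ℕ) : ℝ :=
  if h : j < S.card then ((S.orderIsoOfFin rfl) ⟨j, h⟩ : ℝ) else 0

lemma tval_mem {S : Finset ℝ} {j : ℕ} (h : j < S.card) : tval S j ∈ S := by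
  rw [tval, dif_pos h]; exact (S.orderIsoOfFin rfl ⟨j, h⟩).2

lemma tval_lt_tval {S : Finset ℝ} {i j : ℕ} (hj : j < S.card) (hij : i < j) :
    tval S i < tval S j := by
  rw [tval, tval, dif_pos hj, dif_pos (hij.trans hj)]
  exact_mod_cast (S.orderIsoOfFin rfl).lt_iff_lt.mpr
    (show (⟨i, hij.trans hj⟩ : Fin S.card) < ⟨j, hj⟩ from hij)

lemma tval_le_tval {S : Finset ℝ} {i j : ℕ} (hj : j < S.card) (hij : i ≤ j) :
    tval S i ≤ tval S j := by
  rcases Nat.lt_or_ge i j with h | h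
  · exact (tval_lt_tval hj h).le
  · have : i = j := le_antisymm hij h
    rw [this]

lemma tval_surj {S : Finset ℝ} {x : ℝ} (hx : x ∈ S) :
    ∃ j, ∃ _ : j < S.card, tval S j = x := by
  obtain ⟨i, hi⟩ := (S.orderIsoOfFin rfl).surjective ⟨x, hx⟩
  exact ⟨i.1, i.2, by rw [tval, dif_pos i.2]; exact congrArg Subtype.val hi⟩

lemma tval_zero {S : Finset ℝ} (h0 : (0:ℝ) ∈ S) (hnn : ∀ s ∈ S, (0:ℝ) ≤ s) :
    tval S 0 = 0 := by
  obtain ⟨j, hj, hje⟩ := tval_surj h0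
  have h1 : tval S 0 ≤ tval S j := tval_le_tval hj (Nat.zero_le _)
  have h2 : (0:ℝ) ≤ tval S 0 := hnn _ (tval_mem (by omega))
  linarith [hje ▸ h1]

noncomputable def threshG {Q : Type*} (u : Sym2 Q → ℝ) (t : ℝ) : SimpleGraph Q :=
  SimpleGraph.fromEdgeSet {e | u e ≤ t}

noncomputable def kfSum {Q : Type*} (u : Sym2 Q → ℝ) (S : Finset ℝ) : ℝ :=
  ∑ j ∈ Finset.range (S.card - 1),
    (tval S (j+1) - tval S j) * ((ncomp (threshG u (tval S j)) : ℝ) - 1)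

variable {Q : Type*} [Fintype Q] [Nonempty Q] (u : Sym2 Q → ℝ) (S : Finset ℝ)

lemma telescope_eq (hSnn : ∀ s ∈ S, (0:ℝ) ≤ s) (h0S : (0:ℝ) ∈ S) {x : ℝ} (hx : x ∈ S) :
    x = ∑ j ∈ Finset.range (S.card - 1),
      (tval S (j+1) - tval S j) * (if tval S j < x then 1 else 0) := by
  classical
  obtain ⟨l, hl, rfl⟩ := tval_surj hx
  have hsub : Finset.range l ⊆ Finset.range (S.card - 1) := by
    apply Finset.range_subset_range.mpr; omega
  rw [← Finset.sum_subset hsub ?_]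
  · have hcongr : ∀ j ∈ Finset.range l,
        (tval S (j+1) - tval S j) * (if tval S j < tval S l then 1 else 0)
          = tval S (j+1) - tval S j := by
      intro j hj
      rw [Finset.mem_range] at hj
      rw [if_pos (tval_lt_tval hl hj), mul_one]
    rw [Finset.sum_congr rfl hcongr, Finset.sum_range_sub (fun j => tval S j),
      tval_zero h0S hSnn, sub_zero]
  · intro j hj hjl
    rw [Finset.mem_range] at hj hjl
    have : ¬ (tval S j < tval S l) := not_lt.mpr (tval_le_tval (by omega) (by omega))
    rw [if_neg this, mul_zero]

lemma kf_le_sum (hS : ∀ e, u e ∈ S) (h0S : (0:ℝ) ∈ S)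
    (hSnn : ∀ s ∈ S, (0:ℝ) ≤ s)
    (T : Finset (Sym2 Q)) (hTc : (SimpleGraph.fromEdgeSet (↑T : Set (Sym2 Q))).Connected) :
    kfSum u S ≤ ∑ e ∈ T, u e := by
  classical
  have expand : ∑ e ∈ T, u e = ∑ j ∈ Finset.range (S.card - 1),
      (tval S (j+1) - tval S j) * ((T.filter (fun e => tval S j < u e)).card : ℝ) := by
    calc ∑ e ∈ T, u e
        = ∑ e ∈ T, ∑ j ∈ Finset.range (S.card - 1),
          (tval S (j+1) - tval S j) * (if tval S j < u e then 1 else 0) :=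
          Finset.sum_congr rfl (fun e _ => telescope_eq S hSnn h0S (hS e))
      _ = ∑ j ∈ Finset.range (S.card - 1), ∑ e ∈ T,
          (tval S (j+1) - tval S j) * (if tval S j < u e then 1 else 0) := Finset.sum_comm
      _ = _ := by
          refine Finset.sum_congr rfl (fun j _ => ?_)
          rw [← Finset.mul_sum, Finset.sum_boole]
  rw [expand, kfSum]
  apply Finset.sum_le_sum
  intro j hj
  rw [Finset.mem_range] at hj
  have hΔ : 0 ≤ tval S (j+1) - tval S j :=
    sub_nonneg.mpr (tval_le_tval (by omega) (by omega))
  apply mul_le_mul_of_nonneg_left ?_ hΔ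
  set t := tval S j with ht
  set A := T.filter (fun e => u e ≤ t) with hA
  set Bf := T.filter (fun e => ¬ (u e ≤ t)) with hBf
  have h1 : ncomp (threshG u t) ≤ ncomp (SimpleGraph.fromEdgeSet (↑A : Set (Sym2 Q))) := by
    apply ncomp_le_of_le
    apply SimpleGraph.fromEdgeSet_mono
    intro e he
    rw [Finset.mem_coe, hA, Finset.mem_filter] at he
    exact he.2
  have h2 := ncomp_le_fromEdgeSet_sup (SimpleGraph.fromEdgeSet (↑A : Set (Sym2 Q))) Bf
  have h3 : SimpleGraph.fromEdgeSet (↑A : Set (Sym2 Q)) ⊔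
      SimpleGraph.fromEdgeSet (↑Bf : Set (Sym2 Q))
      = SimpleGraph.fromEdgeSet (↑T : Set (Sym2 Q)) := by
    rw [← SimpleGraph.fromEdgeSet_union]
    congr 1
    rw [← Finset.coe_union, Finset.filter_union_filter_not_eq]
  have h4 : ncomp (SimpleGraph.fromEdgeSet (↑T : Set (Sym2 Q))) = 1 :=
    ncomp_eq_one_of_connected hTc
  rw [h3, h4] at h2
  have hBf' : Bf = T.filter (fun e => t < u e) := by
    apply Finset.filter_congr
    intro e _
    rw [not_le]
  have hfin : ncomp (threshG u t) ≤ (T.filter (fun e => t < u e)).card + 1 := by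
    rw [← hBf']; omega
  have := Nat.cast_le (α := ℝ).mpr hfin
  push_cast at this
  linarith

lemma exists_crossing {G B : SimpleGraph Q} :
    ∀ {a b} (_ : B.Walk a b), ¬ G.Reachable a b →
      ∃ p q, B.Adj p q ∧ ¬ G.Reachable p q := by
  intro a b w
  induction w with
  | nil => intro h; exact absurd (SimpleGraph.Reachable.refl _) h
  | @cons a m b hadj p ih =>
    intro h
    by_cases hG : G.Reachable a m
    · exact ih (fun hc => h (hG.trans hc))
    · exact ⟨a, m, hadj, hG⟩

lemma forest_extend (B : SimpleGraph Q) :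
    ∀ (n : ℕ) (F : Finset (Sym2 Q)),
    ncomp (SimpleGraph.fromEdgeSet (↑F : Set (Sym2 Q))) ≤ n →
    (↑F : Set (Sym2 Q)) ⊆ B.edgeSet →
    ∃ F' : Finset (Sym2 Q), F ⊆ F' ∧ (↑F' : Set (Sym2 Q)) ⊆ B.edgeSet ∧
      (∀ a b, B.Reachable a b ↔
        (SimpleGraph.fromEdgeSet (↑F' : Set (Sym2 Q))).Reachable a b) ∧
      F'.card + ncomp B = F.card + ncomp (SimpleGraph.fromEdgeSet (↑F : Set (Sym2 Q))) := by
  classical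
  intro n
  induction n with
  | zero =>
    intro F h0 _
    have := ncomp_pos (SimpleGraph.fromEdgeSet (↑F : Set (Sym2 Q)))
    omega
  | succ n ih =>
    intro F hle hsub
    have hFle : SimpleGraph.fromEdgeSet (↑F : Set (Sym2 Q)) ≤ B := by
      have := SimpleGraph.fromEdgeSet_mono hsub
      rwa [SimpleGraph.fromEdgeSet_edgeSet] at this
    by_cases hreach : ∀ a b, B.Reachable a b →
        (SimpleGraph.fromEdgeSet (↑F : Set (Sym2 Q))).Reachable a b
    · refine ⟨F, subset_rfl, hsub, fun a b => ⟨hreach a b, fun r => r.mono hFle⟩, ?_⟩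
      have : ncomp B = ncomp (SimpleGraph.fromEdgeSet (↑F : Set (Sym2 Q))) :=
        ncomp_congr (fun a b => ⟨hreach a b, fun r => r.mono hFle⟩)
      omega
    · push_neg at hreach
      obtain ⟨a, b, hab, hnab⟩ := hreach
      obtain ⟨p, q, hpq, hnpq⟩ := exists_crossing hab.some hnab
      have hne : p ≠ q := hpq.ne
      have hnotmem : s(p,q) ∉ F := by
        intro hmem
        exact hnpq (SimpleGraph.Adj.reachable
          ((SimpleGraph.fromEdgeSet_adj _).mpr ⟨Finset.mem_coe.mpr hmem, hne⟩))
      set F'' := insert s(p,q) F with hF''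
      have hgraph : SimpleGraph.fromEdgeSet (↑F'' : Set (Sym2 Q))
          = SimpleGraph.fromEdgeSet (↑F : Set (Sym2 Q)) ⊔ SimpleGraph.edge p q := by
        rw [hF'', Finset.coe_insert, Set.insert_eq, SimpleGraph.fromEdgeSet_union, sup_comm]
        rfl
      have hdec := ncomp_sup_edge_of_not_reachable hne hnpq
      have hle'' : ncomp (SimpleGraph.fromEdgeSet (↑F'' : Set (Sym2 Q))) ≤ n := by
        rw [hgraph]; omega
      have hsub'' : (↑F'' : Set (Sym2 Q)) ⊆ B.edgeSet := by
        rw [hF'', Finset.coe_insert, Set.insert_subset_iff]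
        exact ⟨(SimpleGraph.mem_edgeSet B).mpr hpq, hsub⟩
      obtain ⟨F', h1, h2, h3, h4⟩ := ih F'' hle'' hsub''
      refine ⟨F', (Finset.subset_insert _ _).trans h1, h2, h3, ?_⟩
      have hcard : F''.card = F.card + 1 := Finset.card_insert_of_notMem hnotmem
      rw [hcard, hgraph] at h4
      omega

end Kruskal

section Kruskal2

open SimpleGraph Finset

variable {Q : Type*} [Fintype Q] [Nonempty Q] (u : Sym2 Q → ℝ) (S : Finset ℝ)

lemma exists_good_tree (hu0 : ∀ e, 0 ≤ u e) (hS : ∀ e, u e ∈ S) (h0S : (0:ℝ) ∈ S)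
    (hSnn : ∀ s ∈ S, (0:ℝ) ≤ s) :
    ∃ T : Finset (Sym2 Q), (∀ e ∈ T, ¬ e.IsDiag) ∧
      (SimpleGraph.fromEdgeSet (↑T : Set (Sym2 Q))).Connected ∧
      T.card + 1 = Nat.card Q ∧ ∑ e ∈ T, u e ≤ kfSum u S := by
  classical
  have hm : 0 < S.card := Finset.card_pos.mpr ⟨0, h0S⟩
  set m := S.card with hmdef
  set A : ℕ → ℝ := fun j => ∑ i ∈ Finset.range j,
    (tval S (i+1) - tval S i) * ((ncomp (threshG u (tval S i)) : ℝ) - 1) with hAdef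
  have main : ∀ j, j ≤ m - 1 →
      ∃ F : Finset (Sym2 Q), (↑F : Set (Sym2 Q)) ⊆ (threshG u (tval S j)).edgeSet ∧
        (∀ a b, (threshG u (tval S j)).Reachable a b ↔
          (SimpleGraph.fromEdgeSet (↑F : Set (Sym2 Q))).Reachable a b) ∧
        F.card + ncomp (threshG u (tval S j)) = Fintype.card Q ∧
        ∑ e ∈ F, u e ≤ A j - tval S j * ((ncomp (threshG u (tval S j)) : ℝ) - 1) := by
    intro j
    induction j with
    | zero =>
      intro _
      have hbot : ncomp (SimpleGraph.fromEdgeSet (↑(∅ : Finset (Sym2 Q)) : Set (Sym2 Q)))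
          ≤ Fintype.card Q := by
        rw [Finset.coe_empty, SimpleGraph.fromEdgeSet_empty, ncomp_bot,
          Nat.card_eq_fintype_card]
      obtain ⟨F, h1, h2, h3, h4⟩ := forest_extend (threshG u (tval S 0))
        (Fintype.card Q) ∅ hbot (by simp)
      refine ⟨F, h2, h3, ?_, ?_⟩
      · rw [Finset.card_empty, Finset.coe_empty, SimpleGraph.fromEdgeSet_empty, ncomp_bot,
          Nat.card_eq_fintype_card] at h4
        omega
      · have hz : ∀ e ∈ F, u e = 0 := by
          intro e he
          have hmem := h2 (Finset.mem_coe.mpr he)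
          rw [threshG, SimpleGraph.edgeSet_fromEdgeSet, Set.mem_diff] at hmem
          have h0 : u e ≤ tval S 0 := hmem.1
          rw [tval_zero h0S hSnn] at h0
          exact le_antisymm h0 (hu0 e)
        rw [Finset.sum_congr rfl hz, Finset.sum_const, smul_zero, hAdef]
        simp [tval_zero h0S hSnn]
    | succ j ih =>
      intro hj1
      obtain ⟨F, h1, h2, h3, h4⟩ := ih (by omega)
      have hjm : j + 1 < m := by omega
      have hmono : threshG u (tval S j) ≤ threshG u (tval S (j+1)) := by
        apply SimpleGraph.fromEdgeSet_mono
        intro e he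
        exact le_trans he (tval_le_tval hjm (by omega))
      have hsub : (↑F : Set (Sym2 Q)) ⊆ (threshG u (tval S (j+1))).edgeSet :=
        fun e he => SimpleGraph.edgeSet_mono hmono (h1 he)
      have hncomp : ncomp (SimpleGraph.fromEdgeSet (↑F : Set (Sym2 Q)))
          = ncomp (threshG u (tval S j)) := (ncomp_congr h2).symm
      obtain ⟨F', g1, g2, g3, g4⟩ := forest_extend (threshG u (tval S (j+1)))
        (ncomp (SimpleGraph.fromEdgeSet (↑F : Set (Sym2 Q)))) F le_rfl hsub
      rw [hncomp] at g4
      refine ⟨F', g2, g3, by omega, ?_⟩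
      have hd := Finset.card_sdiff_add_card_eq_card g1
      have hcards : (F' \ F).card + ncomp (threshG u (tval S (j+1)))
          = ncomp (threshG u (tval S j)) := by omega
      have hreal : ((F' \ F).card : ℝ) = (ncomp (threshG u (tval S j)) : ℝ)
          - (ncomp (threshG u (tval S (j+1))) : ℝ) := by
        have := congrArg (fun n : ℕ => (n : ℝ)) hcards
        push_cast at this
        linarith
      have hsplit : ∑ e ∈ F' \ F, u e + ∑ e ∈ F, u e = ∑ e ∈ F', u e :=
        Finset.sum_sdiff g1
      have hnew : ∀ e ∈ F' \ F, u e ≤ tval S (j+1) := by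
        intro e he
        have hmem := g2 (Finset.mem_coe.mpr (Finset.mem_sdiff.mp he).1)
        rw [threshG, SimpleGraph.edgeSet_fromEdgeSet, Set.mem_diff] at hmem
        exact hmem.1
      have hb : ∑ e ∈ F' \ F, u e ≤ ((F' \ F).card : ℝ) * tval S (j+1) := by
        have := Finset.sum_le_card_nsmul (F' \ F) u (tval S (j+1)) hnew
        rwa [nsmul_eq_mul] at this
      have hstep : A (j+1) = A j + (tval S (j+1) - tval S j) *
          ((ncomp (threshG u (tval S j)) : ℝ) - 1) := by
        rw [hAdef]; exact Finset.sum_range_succ _ _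
      rw [hreal] at hb
      linarith
  obtain ⟨F, h1, h2, h3, h4⟩ := main (m - 1) le_rfl
  have huniv : {e : Sym2 Q | u e ≤ tval S (m-1)} = Set.univ := by
    ext e
    simp only [Set.mem_setOf_eq, Set.mem_univ, iff_true]
    obtain ⟨l, hl, hle⟩ := tval_surj (hS e)
    rw [← hle]
    exact tval_le_tval (by omega) (by omega)
  have htop : threshG u (tval S (m-1)) = ⊤ := by
    rw [threshG, huniv, SimpleGraph.fromEdgeSet_univ]
  have hc1 : ncomp (threshG u (tval S (m-1))) = 1 := by
    rw [htop]; exact ncomp_eq_one_of_connected connected_top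
  refine ⟨F, ?_, ?_, ?_, ?_⟩
  · intro e he
    exact SimpleGraph.not_isDiag_of_mem_edgeSet _ (h1 (Finset.mem_coe.mpr he))
  · rw [connected_iff]
    refine ⟨fun a b => (h2 a b).mp ?_, inferInstance⟩
    rw [htop]
    exact connected_top.preconnected a b
  · rw [Nat.card_eq_fintype_card]; omega
  · rw [hc1] at h4
    simpa [kfSum] using h4

theorem mstCost_eq_kfSum (hu0 : ∀ e, 0 ≤ u e) (hS : ∀ e, u e ∈ S) (h0S : (0:ℝ) ∈ S)
    (hSnn : ∀ s ∈ S, (0:ℝ) ≤ s) : mstCost u = kfSum u S := by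
  obtain ⟨T, hT1, hT2, hT3, hT4⟩ := exists_good_tree u S hu0 hS h0S hSnn
  have hmem : (∑ e ∈ T, u e) ∈ {w : ℝ | ∃ T' : Finset (Sym2 Q),
      (∀ e ∈ T', ¬ e.IsDiag) ∧
      (SimpleGraph.fromEdgeSet (↑T' : Set (Sym2 Q))).Connected ∧
      T'.card + 1 = Nat.card Q ∧ w = ∑ e ∈ T', u e} := ⟨T, hT1, hT2, hT3, rfl⟩
  rw [mstCost]
  refine le_antisymm ((csInf_le ⟨0, ?_⟩ hmem).trans hT4) (le_csInf ⟨_, hmem⟩ ?_)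
  · rintro w ⟨T', h1, h2, h3, rfl⟩
    exact Finset.sum_nonneg (fun e _ => hu0 e)
  · rintro w ⟨T', h1, h2, h3, rfl⟩
    exact kf_le_sum u S hS h0S hSnn T' h2

end Kruskal2

section QuotPart

open SimpleGraph Finset

variable {P : Type*} (d : Sym2 P → ℝ) (σ : Setoid P)

/-- The graph on `P` joining distinct `σ`-equivalent elements. -/
def SG (σ : Setoid P) : SimpleGraph P where
  Adj a b := a ≠ b ∧ σ.r a b
  symm := ⟨fun a b ⟨h1, h2⟩ => ⟨Ne.symm h1, σ.iseqv.symm h2⟩⟩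
  loopless := ⟨fun a h => h.1 rfl⟩

variable [Finite P]

lemma quotCost_exists (eQ : Sym2 (Quotient σ)) :
    ∃ a b : P, s(Quotient.mk σ a, Quotient.mk σ b) = eQ ∧ quotCost d σ eQ = d s(a, b) := by
  have hne : {v : ℝ | ∃ a b : P,
      s(Quotient.mk σ a, Quotient.mk σ b) = eQ ∧ v = d s(a, b)}.Nonempty := by
    induction eQ using Sym2.inductionOn with
    | hf q r =>
      obtain ⟨a, rfl⟩ := Quotient.exists_rep q
      obtain ⟨b, rfl⟩ := Quotient.exists_rep r
      exact ⟨d s(a, b), a, b, rfl, rfl⟩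
  have hfin : {v : ℝ | ∃ a b : P,
      s(Quotient.mk σ a, Quotient.mk σ b) = eQ ∧ v = d s(a, b)}.Finite := by
    apply Set.Finite.subset (Set.finite_range (fun p : P × P => d s(p.1, p.2)))
    rintro v ⟨a, b, _, rfl⟩
    exact ⟨(a, b), rfl⟩
  have hmem := Set.Nonempty.csInf_mem hne hfin
  obtain ⟨a, b, hab, hv⟩ := hmem
  exact ⟨a, b, hab, hv⟩

lemma quotCost_le (hd : ∀ e, 0 ≤ d e) (a b : P) :
    quotCost d σ s(Quotient.mk σ a, Quotient.mk σ b) ≤ d s(a, b) := by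
  apply csInf_le
  · refine ⟨0, ?_⟩
    rintro v ⟨a', b', _, rfl⟩
    exact hd _
  · exact ⟨a, b, rfl, rfl⟩

lemma quotCost_nonneg_s12 (hd : ∀ e, 0 ≤ d e) (eQ : Sym2 (Quotient σ)) :
    0 ≤ quotCost d σ eQ := by
  obtain ⟨a, b, _, hv⟩ := quotCost_exists d σ eQ
  rw [hv]; exact hd _

lemma reach_of_rel {t : ℝ} {a b : P} (h : σ.r a b) :
    (threshG d t ⊔ SG σ).Reachable a b := by
  by_cases hab : a = b
  · subst hab; exact Reachable.refl _
  · exact SimpleGraph.Adj.reachable (Or.inr ⟨hab, h⟩)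

lemma quot_reach_up (hd : ∀ e, 0 ≤ d e) {t : ℝ} {a b : P}
    (r : (threshG d t ⊔ SG σ).Reachable a b) :
    (threshG (quotCost d σ) t).Reachable (Quotient.mk σ a) (Quotient.mk σ b) := by
  obtain ⟨w⟩ := r
  induction w with
  | nil => exact Reachable.refl _
  | @cons a m b h p ih =>
    rcases h with h | h
    · rw [threshG, SimpleGraph.fromEdgeSet_adj] at h
      by_cases hq : Quotient.mk σ a = Quotient.mk σ m
      · rw [hq]; exact ih
      · refine (SimpleGraph.Adj.reachable ?_).trans ih
        rw [threshG, SimpleGraph.fromEdgeSet_adj]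
        exact ⟨le_trans (quotCost_le d σ hd a m) h.1, hq⟩
    · rw [Quotient.sound h.2]
      exact ih

lemma quot_reach_down (hd : ∀ e, 0 ≤ d e) {t : ℝ} :
    ∀ {q r : Quotient σ} (_ : (threshG (quotCost d σ) t).Walk q r)
      (a b : P), Quotient.mk σ a = q → Quotient.mk σ b = r →
      (threshG d t ⊔ SG σ).Reachable a b := by
  intro q r w
  induction w with
  | nil =>
    intro a b ha hb
    exact reach_of_rel d σ (Quotient.exact (ha.trans hb.symm))
  | @cons q m r h p ih =>
    intro a b ha hb
    rw [threshG, SimpleGraph.fromEdgeSet_adj] at h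
    obtain ⟨hle, hne⟩ := h
    obtain ⟨a', b', hab, hv⟩ := quotCost_exists d σ s(q, m)
    have hle' : quotCost d σ s(q, m) ≤ t := hle
    rw [hv] at hle'
    rw [Sym2.eq_iff] at hab
    rcases hab with ⟨ha', hb'⟩ | ⟨ha', hb'⟩
    · have r1 : (threshG d t ⊔ SG σ).Reachable a a' :=
        reach_of_rel d σ (Quotient.exact (ha.trans ha'.symm))
      have hadj : (threshG d t ⊔ SG σ).Adj a' b' := by
        left
        rw [threshG, SimpleGraph.fromEdgeSet_adj]
        refine ⟨hle', fun hc => hne ?_⟩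
        rw [← ha', ← hb', hc]
      exact (r1.trans hadj.reachable).trans (ih b' b hb' hb)
    · have r1 : (threshG d t ⊔ SG σ).Reachable a b' :=
        reach_of_rel d σ (Quotient.exact (ha.trans hb'.symm))
      have hadj : (threshG d t ⊔ SG σ).Adj b' a' := by
        left
        rw [threshG, SimpleGraph.fromEdgeSet_adj]
        refine ⟨by rw [Sym2.eq_swap]; exact hle', fun hc => hne ?_⟩
        rw [← hb', ← ha', hc]
      exact (r1.trans hadj.reachable).trans (ih a' b ha' hb)

lemma ncomp_quot_eq (hd : ∀ e, 0 ≤ d e) (t : ℝ) :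
    ncomp (threshG (quotCost d σ) t) = ncomp (threshG d t ⊔ SG σ) := by
  symm
  refine Nat.card_eq_of_bijective (SimpleGraph.ConnectedComponent.lift
    (fun v => (threshG (quotCost d σ) t).connectedComponentMk (Quotient.mk σ v))
    (fun v w p _ => ConnectedComponent.sound (quot_reach_up d σ hd ⟨p⟩))) ⟨?_, ?_⟩
  · intro c1 c2
    refine ConnectedComponent.ind₂ (fun a b h => ?_) c1 c2
    simp only [ConnectedComponent.lift_mk] at h
    obtain ⟨w⟩ := ConnectedComponent.exact h
    exact ConnectedComponent.sound (quot_reach_down d σ hd w a b rfl rfl)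
  · intro c'
    refine c'.ind (fun q => ?_)
    obtain ⟨a, rfl⟩ := Quotient.exists_rep q
    exact ⟨(threshG d t ⊔ SG σ).connectedComponentMk a, rfl⟩

theorem mstCost_quot_eq [Fintype P] [Nonempty P] (hd : ∀ e, 0 ≤ d e) (S : Finset ℝ)
    (hS : ∀ e, d e ∈ S) (h0S : (0:ℝ) ∈ S) (hSnn : ∀ s ∈ S, (0:ℝ) ≤ s) :
    mstCost (quotCost d σ) = ∑ j ∈ Finset.range (S.card - 1),
      (tval S (j+1) - tval S j) * ((ncomp (threshG d (tval S j) ⊔ SG σ) : ℝ) - 1) := by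
  haveI : Finite (Quotient σ) := Quotient.finite σ
  haveI : Fintype (Quotient σ) := Fintype.ofFinite _
  haveI : Nonempty (Quotient σ) := Nonempty.map (Quotient.mk σ) inferInstance
  have hq0 : ∀ eQ, 0 ≤ quotCost d σ eQ := quotCost_nonneg_s12 d σ hd
  have hqS : ∀ eQ, quotCost d σ eQ ∈ S := by
    intro eQ
    obtain ⟨a, b, _, hv⟩ := quotCost_exists d σ eQ
    rw [hv]; exact hS _
  rw [mstCost_eq_kfSum (quotCost d σ) S hq0 hqS h0S hSnn, kfSum]
  exact Finset.sum_congr rfl (fun j _ => by rw [ncomp_quot_eq d σ hd])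

end QuotPart

section NsumPart

open SimpleGraph Finset

variable {P : Type*} [Fintype P] [Nonempty P] (d : Sym2 P → ℝ) (S : Finset ℝ)

noncomputable def nsum (A : SimpleGraph P) : ℝ :=
  ∑ j ∈ Finset.range (S.card - 1), (tval S (j+1) - tval S j) *
    ((ncomp (threshG d (tval S j) ⊔ A) : ℝ) - 1)

lemma nsum_bot : nsum d S (⊥ : SimpleGraph P) = kfSum d S := by
  rw [nsum, kfSum]
  exact Finset.sum_congr rfl (fun j _ => by rw [sup_bot_eq])

lemma tval_diff_nonneg {j : ℕ} (hj : j ∈ Finset.range (S.card - 1)) :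
    0 ≤ tval S (j+1) - tval S j := by
  rw [Finset.mem_range] at hj
  exact sub_nonneg.mpr (tval_le_tval (by omega) (by omega))

lemma nsum_mono {A B : SimpleGraph P} (h : ∀ a b, A.Adj a b → B.Reachable a b) :
    nsum d S B ≤ nsum d S A := by
  apply Finset.sum_le_sum
  intro j hj
  apply mul_le_mul_of_nonneg_left ?_ (tval_diff_nonneg S hj)
  have hcomp : ncomp (threshG d (tval S j) ⊔ B) ≤ ncomp (threshG d (tval S j) ⊔ A) := by
    calc ncomp (threshG d (tval S j) ⊔ B)
        = ncomp ((threshG d (tval S j) ⊔ B) ⊔ A) := by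
          refine (ncomp_sup_eq_of_reach (fun a b hab => ?_)).symm
          exact (h a b hab).mono le_sup_right
      _ = ncomp (threshG d (tval S j) ⊔ A ⊔ B) := by rw [sup_right_comm]
      _ ≤ ncomp (threshG d (tval S j) ⊔ A) := ncomp_le_of_le le_sup_left
  have := Nat.cast_le (α := ℝ).mpr hcomp
  linarith

lemma nsum_submod (A B : SimpleGraph P) :
    nsum d S A + nsum d S B ≤ nsum d S ⊥ + nsum d S (A ⊔ B) := by
  rw [nsum, nsum, nsum, nsum, ← Finset.sum_add_distrib, ← Finset.sum_add_distrib]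
  apply Finset.sum_le_sum
  intro j hj
  have hsm := ncomp_submod (threshG d (tval S j)) A B
  rw [sup_assoc] at hsm
  have hcast := Nat.cast_le (α := ℝ).mpr hsm
  push_cast at hcast
  have hΔ := tval_diff_nonneg S hj
  set D := threshG d (tval S j)
  rw [sup_bot_eq]
  set x := (ncomp (D ⊔ A) : ℝ)
  set y := (ncomp (D ⊔ B) : ℝ)
  set z := (ncomp D : ℝ)
  set w := (ncomp (D ⊔ (A ⊔ B)) : ℝ)
  have h2 : (tval S (j+1) - tval S j) * ((x + y) - 2)
      ≤ (tval S (j+1) - tval S j) * ((z + w) - 2) :=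
    mul_le_mul_of_nonneg_left (by linarith) hΔ
  nlinarith [h2]

lemma nsum_subadd {ι : Type*} (f : ι → SimpleGraph P) (s : Finset ι) :
    nsum d S ⊥ - nsum d S (s.sup f) ≤ ∑ i ∈ s, (nsum d S ⊥ - nsum d S (f i)) := by
  classical
  induction s using Finset.induction with
  | empty => rw [Finset.sup_empty, Finset.sum_empty, sub_self]
  | @insert i s hi ih =>
    rw [Finset.sup_insert, Finset.sum_insert hi]
    have hsub := nsum_submod d S (f i) (s.sup f)
    linarith

end NsumPart

section MainPart

open SimpleGraph Finset

lemma restrictDist_nonneg {V : Type*} (G : SimpleGraph V) (c : Sym2 V → ℝ)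
    (hc : ∀ e ∈ G.edgeSet, 0 < c e) (R : Finset V) :
    ∀ e : Sym2 {v : V // v ∈ R}, 0 ≤ restrictDist G c R e := by
  intro e
  induction e using Sym2.inductionOn with
  | hf a b =>
    show (0:ℝ) ≤ sInf {x : ℝ | (∃ p : G.Walk (a:V) (b:V), x = (p.edges.map c).sum) ∨
      (∃ p : G.Walk (b:V) (a:V), x = (p.edges.map c).sum)}
    apply Real.sInf_nonneg
    rintro x (⟨p, rfl⟩ | ⟨p, rfl⟩) <;>
    · apply List.sum_nonneg
      intro y hy
      obtain ⟨e', he', rfl⟩ := List.mem_map.mp hy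
      exact (hc e' (p.edges_subset_edgeSet he')).le

/-- Every improving component contains a full improving component:
if `K` is a component connecting the terminal set `X` with `c(K) < drop_G(X)`, and
`K` decomposes into (maximal) full components `K_1, …, K_k` connecting terminal sets
`X_1, …, X_k` (pairwise disjoint edge sets covering `K`, with `X` connected through the
equivalence generated by the `X_i`), then some `K_i` satisfies `c(K_i) < drop_G(X_i)`. -/
theorem improving_component_has_full_improving {V : Type*} [Fintype V] [DecidableEq V]
    (G : SimpleGraph V) (hG : G.Connected)
    (c : Sym2 V → ℝ) (hc : ∀ e ∈ G.edgeSet, 0 < c e)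
    (R : Finset V) (hR : R.Nonempty)
    (X : Set {v : V // v ∈ R})
    (K : Finset (Sym2 V)) (hKE : (↑K : Set (Sym2 V)) ⊆ G.edgeSet)
    (hKconn : ConnectsSet (↑K : Set (Sym2 V)) (Subtype.val '' X))
    (himp : ∑ e ∈ K, c e < dropCost (restrictDist G c R) X)
    (k : ℕ) (Ki : Fin k → Finset (Sym2 V)) (Xi : Fin k → Set {v : V // v ∈ R})
    (hdisj : ∀ i j : Fin k, i ≠ j → Disjoint (Ki i) (Ki j))
    (hcover : K = Finset.univ.biUnion Ki)
    (hfull : ∀ i : Fin k, IsFullComponent G R (Ki i))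
    (hXi : ∀ i : Fin k, Xi i = {x : {v : V // v ∈ R} | ∃ e ∈ Ki i, (x : V) ∈ e})
    (hgen : ∀ x ∈ X, ∀ y ∈ X,
      Relation.EqvGen (fun a b => ∃ i : Fin k, a ∈ Xi i ∧ b ∈ Xi i) x y) :
    ∃ i : Fin k, ∑ e ∈ Ki i, c e < dropCost (restrictDist G c R) (Xi i) := by
  classical
  by_contra hcon
  push_neg at hcon
  haveI : Nonempty {v : V // v ∈ R} := ⟨⟨hR.choose, hR.choose_spec⟩⟩
  set d : Sym2 {v : V // v ∈ R} → ℝ := restrictDist G c R with hd'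
  have hd : ∀ e, 0 ≤ d e := restrictDist_nonneg G c hc R
  set S : Finset ℝ := insert (0:ℝ) (Finset.image d Finset.univ) with hS'
  have h0S : (0:ℝ) ∈ S := Finset.mem_insert_self _ _
  have hS : ∀ e, d e ∈ S :=
    fun e => Finset.mem_insert_of_mem (Finset.mem_image_of_mem d (Finset.mem_univ e))
  have hSnn : ∀ s ∈ S, (0:ℝ) ≤ s := by
    intro s hs
    rcases Finset.mem_insert.mp hs with rfl | hs
    · exact le_rfl
    · obtain ⟨e, _, rfl⟩ := Finset.mem_image.mp hs
      exact hd e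
  -- the master identities
  have hM : mstCost d = nsum d S (⊥ : SimpleGraph {v : V // v ∈ R}) := by
    rw [nsum_bot, mstCost_eq_kfSum d S hd hS h0S hSnn]
  have hQ : ∀ Y : Set {v : V // v ∈ R}, mstCost (quotCost d (contractSetoid Y))
      = nsum d S (SG (contractSetoid Y)) :=
    fun Y => mstCost_quot_eq d (contractSetoid Y) hd S hS h0S hSnn
  -- the big sup graph
  set J : SimpleGraph {v : V // v ∈ R} :=
    Finset.univ.sup (fun i : Fin k => SG (contractSetoid (Xi i))) with hJ'
  have hEqv : ∀ a b : {v : V // v ∈ R},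
      Relation.EqvGen (fun a b => ∃ i : Fin k, a ∈ Xi i ∧ b ∈ Xi i) a b →
      J.Reachable a b := by
    intro a b h
    induction h with
    | rel x y hxy =>
      obtain ⟨i, h1, h2⟩ := hxy
      by_cases hxy' : x = y
      · subst hxy'; exact Reachable.refl _
      · have hadj : (SG (contractSetoid (Xi i))).Adj x y := ⟨hxy', Or.inr ⟨h1, h2⟩⟩
        have hle : SG (contractSetoid (Xi i)) ≤ J :=
          Finset.le_sup (f := fun i : Fin k => SG (contractSetoid (Xi i)))
            (Finset.mem_univ i)
        exact (SimpleGraph.Adj.reachable hadj).mono hle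
    | refl x => exact Reachable.refl _
    | symm x y _ ih => exact ih.symm
    | trans x y z _ _ ih1 ih2 => exact ih1.trans ih2
  -- monotonicity step
  have hmono : nsum d S J ≤ nsum d S (SG (contractSetoid X)) := by
    apply nsum_mono
    intro a b hab
    obtain ⟨hne, hr⟩ := hab
    rcases hr with rfl | ⟨ha, hb⟩
    · exact absurd rfl hne
    · exact hEqv a b (hgen a ha b hb)
  -- subadditivity step
  have hsub := nsum_subadd d S (fun i : Fin k => SG (contractSetoid (Xi i))) Finset.univ
  -- combine
  have hdropX : dropCost d X = mstCost d - mstCost (quotCost d (contractSetoid X)) := rfl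
  have hdropXi : ∀ i : Fin k, dropCost d (Xi i)
      = mstCost d - mstCost (quotCost d (contractSetoid (Xi i))) := fun _ => rfl
  have key : dropCost d X ≤ ∑ i : Fin k, dropCost d (Xi i) := by
    rw [hdropX, hM, hQ]
    calc nsum d S ⊥ - nsum d S (SG (contractSetoid X))
        ≤ nsum d S ⊥ - nsum d S J := by linarith
      _ ≤ ∑ i : Fin k, (nsum d S ⊥ - nsum d S (SG (contractSetoid (Xi i)))) := hsub
      _ = ∑ i : Fin k, dropCost d (Xi i) := by
          refine Finset.sum_congr rfl (fun i _ => ?_)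
          rw [hdropXi i, hM, hQ]
  have hbound : ∑ i : Fin k, dropCost d (Xi i) ≤ ∑ i : Fin k, ∑ e ∈ Ki i, c e :=
    Finset.sum_le_sum (fun i _ => hcon i)
  have hsplit : ∑ e ∈ K, c e = ∑ i : Fin k, ∑ e ∈ Ki i, c e := by
    rw [hcover]
    exact Finset.sum_biUnion (fun i _ j _ hij => hdisj i j hij)
  linarith [himp, key, hbound, hsplit.le, hsplit.ge]

end MainPart
end

section
/- In the complete graph on a terminal set R, every linear program of the form of the dual of the Hypergraphic Relaxation admits an optimal solution whose support is a laminar family: if y is feasible for the constraints Σ_{S : (X,v) ∈ δ⁺(S)} y_S ≤ cost(X) for all pairs (X,v) with v ∈ X ⊆ R, and y ≥ 0, then there exists an optimal y* (maximizing Σ_S y*_S) such that any two sets in the support of y* are nested or disjoint. -/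
/-- Feasibility for the dual of the Hypergraphic Relaxation: `y` is nonnegative,
supported on nonempty sets not containing the root `r`, and satisfies
`Σ_{S : (X,v) ∈ δ⁺(S)} y_S ≤ cost X` for every pair `(X, v)` with `v ∈ X ⊆ R`. -/
def HypDualFeasible {R : Type*} [Fintype R] [DecidableEq R]
    (r : R) (cost : Finset R → ℝ) (y : Finset R → ℝ) : Prop :=
  (∀ S : Finset R, 0 ≤ y S) ∧
  (∀ S : Finset R, ¬(S.Nonempty ∧ r ∉ S) → y S = 0) ∧
  (∀ X : Finset R, ∀ v ∈ X,
    (∑ S ∈ Finset.univ.filter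
        (fun S : Finset R => (X ∩ S).Nonempty ∧ v ∉ S), y S) ≤ cost X)

/-- The dual of the Hypergraphic Relaxation admits an optimal
solution whose support is a laminar family: any two sets in the support are nested
or disjoint. -/
theorem hypergraphic_dual_laminar_optimum {R : Type*} [Fintype R] [DecidableEq R]
    (r : R) (cost : Finset R → ℝ) (hcost : ∀ X, 0 ≤ cost X) :
    ∃ y : Finset R → ℝ,
      HypDualFeasible r cost y ∧
      (∀ y' : Finset R → ℝ, HypDualFeasible r cost y' →
        (∑ S : Finset R, y' S) ≤ (∑ S : Finset R, y S)) ∧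
      (∀ S1 S2 : Finset R, 0 < y S1 → 0 < y S2 →
        S1 ⊆ S2 ∨ S2 ⊆ S1 ∨ S1 ∩ S2 = ∅) := by
  classical
  set K : Set (Finset R → ℝ) := {y | HypDualFeasible r cost y} with hKdef
  -- every feasible solution is pointwise bounded
  have hbound : ∀ y ∈ K, ∀ S, y S ≤ cost (insert r S) := by
    intro y hy S
    obtain ⟨h0, hsupp, hcon⟩ := hy
    by_cases hS : S.Nonempty ∧ r ∉ S
    · refine le_trans ?_ (hcon (insert r S) r (Finset.mem_insert_self r S))
      refine Finset.single_le_sum (fun i _ => h0 i) ?_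
      simp only [Finset.mem_filter, Finset.mem_univ, true_and]
      refine ⟨?_, hS.2⟩
      obtain ⟨x, hx⟩ := hS.1
      exact ⟨x, Finset.mem_inter.2 ⟨Finset.mem_insert_of_mem hx, hx⟩⟩
    · rw [hsupp S hS]; exact hcost _
  have hKclosed : IsClosed K := by
    have hKeq : K = (⋂ S : Finset R, {y : Finset R → ℝ | 0 ≤ y S}) ∩
        ((⋂ S : Finset R, ⋂ _ : ¬(S.Nonempty ∧ r ∉ S), {y : Finset R → ℝ | y S = 0}) ∩
         (⋂ X : Finset R, ⋂ v : R, ⋂ _ : v ∈ X,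
            {y : Finset R → ℝ |
              (∑ S ∈ Finset.univ.filter
                (fun S : Finset R => (X ∩ S).Nonempty ∧ v ∉ S), y S) ≤ cost X})) := by
      ext y
      simp only [hKdef, HypDualFeasible, Set.mem_setOf_eq, Set.mem_inter_iff,
        Set.mem_iInter]
    rw [hKeq]
    refine IsClosed.inter ?_ (IsClosed.inter ?_ ?_)
    · exact isClosed_iInter fun S => isClosed_le continuous_const (continuous_apply S)
    · exact isClosed_iInter fun S => isClosed_iInter fun _ =>
        isClosed_eq (continuous_apply S) continuous_const
    · exact isClosed_iInter fun X => isClosed_iInter fun v => isClosed_iInter fun _ =>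
        isClosed_le (continuous_finset_sum _ fun S _ => continuous_apply S) continuous_const
  have hKcpt : IsCompact K := by
    refine IsCompact.of_isClosed_subset
      (isCompact_univ_pi fun S => (isCompact_Icc (a := (0:ℝ)) (b := cost (insert r S))))
      hKclosed ?_
    intro y hy S _
    exact ⟨hy.1 S, hbound y hy S⟩
  have h0K : (0 : Finset R → ℝ) ∈ K := by
    refine ⟨fun S => le_refl 0, fun S _ => rfl, fun X v hv => ?_⟩
    simpa using hcost X
  have hfcont : Continuous (fun y : Finset R → ℝ => ∑ S : Finset R, y S) :=
    continuous_finset_sum _ fun S _ => continuous_apply S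
  obtain ⟨y₀, hy₀K, hy₀max⟩ := hKcpt.exists_isMaxOn ⟨0, h0K⟩ hfcont.continuousOn
  -- second stage
  set K' : Set (Finset R → ℝ) :=
    K ∩ {y | (∑ S : Finset R, y S) = ∑ S : Finset R, y₀ S} with hK'def
  have hK'cpt : IsCompact K' :=
    hKcpt.inter_right (isClosed_eq hfcont continuous_const)
  have hgcont : Continuous
      (fun y : Finset R → ℝ => ∑ S : Finset R, y S * ((S.card : ℝ))^2) :=
    continuous_finset_sum _ fun S _ => (continuous_apply S).mul continuous_const
  obtain ⟨w, hwK', hwmax⟩ := hK'cpt.exists_isMaxOn ⟨y₀, hy₀K, rfl⟩ hgcont.continuousOn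
  obtain ⟨hwK, hwf⟩ := hwK'
  refine ⟨w, hwK, ?_, ?_⟩
  · intro y' hy'
    calc (∑ S : Finset R, y' S) ≤ ∑ S : Finset R, y₀ S := hy₀max hy'
    _ = ∑ S : Finset R, w S := hwf.symm
  · intro S1 S2 h1 h2
    by_contra hcon
    push_neg at hcon
    obtain ⟨hns1, hns2, hne⟩ := hcon
    obtain ⟨hw0, hwsupp, hwcon⟩ := hwK
    have hI : (S1 ∩ S2).Nonempty := hne
    set ε := min (w S1) (w S2) with hεdef
    have hε : 0 < ε := lt_min h1 h2
    set I := S1 ∩ S2 with hIdef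
    set U := S1 ∪ S2 with hUdef
    have hgood1 : S1.Nonempty ∧ r ∉ S1 := by
      by_contra h; exact absurd (hwsupp S1 h) (ne_of_gt h1)
    have hgood2 : S2.Nonempty ∧ r ∉ S2 := by
      by_contra h; exact absurd (hwsupp S2 h) (ne_of_gt h2)
    have hIne1 : I ≠ S1 := fun h => hns1 (Finset.inter_eq_left.mp h)
    have hIne2 : I ≠ S2 := fun h => hns2 (Finset.inter_eq_right.mp h)
    have hUne1 : U ≠ S1 := fun h => hns2 (Finset.union_eq_left.mp h)
    have hUne2 : U ≠ S2 := fun h => hns1 (Finset.union_eq_right.mp h)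
    have hIU : I ≠ U := by
      intro h
      refine hns1 fun x hx => ?_
      have hxI : x ∈ I := h ▸ Finset.mem_union_left S2 hx
      exact Finset.mem_of_mem_inter_right hxI
    have hne12 : S1 ≠ S2 := fun h => hns1 (h ▸ subset_refl S1)
    -- the uncrossed solution
    set z : Finset R → ℝ := fun S => w S
      + (if S = I then ε else 0) + (if S = U then ε else 0)
      - (if S = S1 then ε else 0) - (if S = S2 then ε else 0) with hzdef
    have hzI : z I = w I + ε := by simp [hzdef, hIU, hIne1, hIne2]
    have hzU : z U = w U + ε := by simp [hzdef, hIU.symm, hUne1, hUne2]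
    have hzS1 : z S1 = w S1 - ε := by simp [hzdef, hIne1.symm, hUne1.symm, hne12]
    have hzS2 : z S2 = w S2 - ε := by simp [hzdef, hIne2.symm, hUne2.symm, hne12.symm]
    have hzother : ∀ S, S ≠ I → S ≠ U → S ≠ S1 → S ≠ S2 → z S = w S := by
      intro S a b c d; simp [hzdef, a, b, c, d]
    -- z is feasible
    have hz0 : ∀ S, 0 ≤ z S := by
      intro S
      rcases eq_or_ne S I with rfl | hSI
      · rw [hzI]; exact add_nonneg (hw0 _) hε.le
      rcases eq_or_ne S U with rfl | hSU
      · rw [hzU]; exact add_nonneg (hw0 _) hε.le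
      rcases eq_or_ne S S1 with rfl | hSS1
      · rw [hzS1]; linarith [min_le_left (w S) (w S2)]
      rcases eq_or_ne S S2 with rfl | hSS2
      · rw [hzS2]; linarith [min_le_right (w S1) (w S)]
      · rw [hzother S hSI hSU hSS1 hSS2]; exact hw0 S
    have hzsupp : ∀ S : Finset R, ¬(S.Nonempty ∧ r ∉ S) → z S = 0 := by
      intro S hS
      have hSI : S ≠ I := by
        rintro rfl
        exact hS ⟨hI, fun h => hgood1.2 (Finset.mem_of_mem_inter_left h)⟩
      have hSU : S ≠ U := by
        rintro rfl
        refine hS ⟨hgood1.1.mono Finset.subset_union_left, fun h => ?_⟩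
        rcases Finset.mem_union.mp h with h | h
        · exact hgood1.2 h
        · exact hgood2.2 h
      have hSS1 : S ≠ S1 := by rintro rfl; exact hS hgood1
      have hSS2 : S ≠ S2 := by rintro rfl; exact hS hgood2
      rw [hzother S hSI hSU hSS1 hSS2]; exact hwsupp S hS
    have hzcon : ∀ X : Finset R, ∀ v ∈ X,
        (∑ S ∈ Finset.univ.filter
          (fun S : Finset R => (X ∩ S).Nonempty ∧ v ∉ S), z S) ≤ cost X := by
      intro X v hv
      set F := Finset.univ.filter
        (fun S : Finset R => (X ∩ S).Nonempty ∧ v ∉ S) with hFdef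
      have hmem : ∀ S : Finset R, S ∈ F ↔ ((X ∩ S).Nonempty ∧ v ∉ S) := by
        intro S; simp [hFdef]
      have hsum : (∑ S ∈ F, z S) = (∑ S ∈ F, w S)
          + (if I ∈ F then ε else 0) + (if U ∈ F then ε else 0)
          - (if S1 ∈ F then ε else 0) - (if S2 ∈ F then ε else 0) := by
        simp only [hzdef]
        rw [Finset.sum_sub_distrib, Finset.sum_sub_distrib, Finset.sum_add_distrib,
          Finset.sum_add_distrib, Finset.sum_ite_eq' F I (fun _ => ε),
          Finset.sum_ite_eq' F U (fun _ => ε), Finset.sum_ite_eq' F S1 (fun _ => ε),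
          Finset.sum_ite_eq' F S2 (fun _ => ε)]
      -- uncrossing inequality on indicators
      have hImp1 : I ∈ F → (S1 ∈ F ∨ S2 ∈ F) := by
        rw [hmem, hmem, hmem]
        rintro ⟨hXI, hvI⟩
        have h1' : (X ∩ S1).Nonempty :=
          hXI.mono (Finset.inter_subset_inter (subset_refl X) Finset.inter_subset_left)
        have h2' : (X ∩ S2).Nonempty :=
          hXI.mono (Finset.inter_subset_inter (subset_refl X) Finset.inter_subset_right)
        by_cases hv1 : v ∈ S1
        · right
          exact ⟨h2', fun hv2 => hvI (Finset.mem_inter.mpr ⟨hv1, hv2⟩)⟩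
        · left; exact ⟨h1', hv1⟩
      have hImp2 : U ∈ F → (S1 ∈ F ∨ S2 ∈ F) := by
        rw [hmem, hmem, hmem]
        rintro ⟨hXU, hvU⟩
        have hv1 : v ∉ S1 := fun h => hvU (Finset.mem_union_left _ h)
        have hv2 : v ∉ S2 := fun h => hvU (Finset.mem_union_right _ h)
        obtain ⟨x, hx⟩ := hXU
        rcases Finset.mem_union.mp (Finset.mem_of_mem_inter_right hx) with h | h
        · exact Or.inl ⟨⟨x, Finset.mem_inter.mpr ⟨Finset.mem_of_mem_inter_left hx, h⟩⟩, hv1⟩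
        · exact Or.inr ⟨⟨x, Finset.mem_inter.mpr ⟨Finset.mem_of_mem_inter_left hx, h⟩⟩, hv2⟩
      have hImp3 : I ∈ F → U ∈ F → (S1 ∈ F ∧ S2 ∈ F) := by
        rw [hmem, hmem, hmem, hmem]
        rintro ⟨hXI, _⟩ ⟨_, hvU⟩
        have hv1 : v ∉ S1 := fun h => hvU (Finset.mem_union_left _ h)
        have hv2 : v ∉ S2 := fun h => hvU (Finset.mem_union_right _ h)
        exact ⟨⟨hXI.mono (Finset.inter_subset_inter (subset_refl X) Finset.inter_subset_left), hv1⟩,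
          ⟨hXI.mono (Finset.inter_subset_inter (subset_refl X) Finset.inter_subset_right), hv2⟩⟩
      have key : (if I ∈ F then ε else 0) + (if U ∈ F then ε else 0)
          ≤ (if S1 ∈ F then ε else 0) + (if S2 ∈ F then ε else 0) := by
        by_cases hi : I ∈ F <;> by_cases hu : U ∈ F
        · obtain ⟨ha, hb⟩ := hImp3 hi hu
          simp [hi, hu, ha, hb]
        · rcases hImp1 hi with ha | ha <;>
            simp [hi, hu, ha] <;> split_ifs <;> linarith
        · rcases hImp2 hu with ha | ha <;>
            simp [hi, hu, ha] <;> split_ifs <;> linarith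
        · simp [hi, hu]; split_ifs <;> linarith
      have hbase := hwcon X v hv
      rw [← hFdef] at hbase
      rw [hsum]; linarith
    have hzK : z ∈ K := ⟨hz0, hzsupp, hzcon⟩
    -- same primary objective
    have hzsum : (∑ S : Finset R, z S) = ∑ S : Finset R, w S := by
      simp only [hzdef]
      rw [Finset.sum_sub_distrib, Finset.sum_sub_distrib, Finset.sum_add_distrib,
        Finset.sum_add_distrib, Finset.sum_ite_eq' Finset.univ I (fun _ => ε),
        Finset.sum_ite_eq' Finset.univ U (fun _ => ε),
        Finset.sum_ite_eq' Finset.univ S1 (fun _ => ε),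
        Finset.sum_ite_eq' Finset.univ S2 (fun _ => ε)]
      simp
    have hzK' : z ∈ K' := ⟨hzK, by rw [Set.mem_setOf_eq, hzsum, hwf]⟩
    -- strictly larger secondary objective: contradiction
    have hcards : U.card + I.card = S1.card + S2.card := Finset.card_union_add_card_inter S1 S2
    have hc1 : S1.card < U.card :=
      Finset.card_lt_card (Finset.ssubset_iff_subset_ne.mpr ⟨Finset.subset_union_left, hUne1.symm⟩)
    have hc2 : S2.card < U.card :=
      Finset.card_lt_card (Finset.ssubset_iff_subset_ne.mpr ⟨Finset.subset_union_right, hUne2.symm⟩)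
    have hgz : (∑ S : Finset R, w S * ((S.card : ℝ))^2)
        < ∑ S : Finset R, z S * ((S.card : ℝ))^2 := by
      have hexp : (∑ S : Finset R, z S * ((S.card : ℝ))^2)
          = (∑ S : Finset R, w S * ((S.card : ℝ))^2)
            + ε * ((I.card : ℝ))^2 + ε * ((U.card : ℝ))^2
            - ε * ((S1.card : ℝ))^2 - ε * ((S2.card : ℝ))^2 := by
        simp only [hzdef]
        simp only [sub_mul, add_mul, ite_mul, zero_mul]
        rw [Finset.sum_sub_distrib, Finset.sum_sub_distrib, Finset.sum_add_distrib,
          Finset.sum_add_distrib, Finset.sum_ite_eq' Finset.univ I,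
          Finset.sum_ite_eq' Finset.univ U, Finset.sum_ite_eq' Finset.univ S1,
          Finset.sum_ite_eq' Finset.univ S2]
        simp
      rw [hexp]
      have hcR : (U.card : ℝ) + (I.card : ℝ) = (S1.card : ℝ) + (S2.card : ℝ) := by
        exact_mod_cast congrArg (fun n : ℕ => (n : ℝ)) hcards
      have hc1R : (S1.card : ℝ) < (U.card : ℝ) := by exact_mod_cast hc1
      have hc2R : (S2.card : ℝ) < (U.card : ℝ) := by exact_mod_cast hc2
      have hIR : (I.card : ℝ) = (S1.card : ℝ) + (S2.card : ℝ) - (U.card : ℝ) := by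
        linarith
      have hkey : ε * ((I.card : ℝ))^2 + ε * ((U.card : ℝ))^2
          - ε * ((S1.card : ℝ))^2 - ε * ((S2.card : ℝ))^2
          = 2 * (ε * (((U.card : ℝ) - (S1.card : ℝ)) * ((U.card : ℝ) - (S2.card : ℝ)))) := by
        rw [hIR]; ring
      have hpos : 0 < ε * (((U.card : ℝ) - (S1.card : ℝ)) * ((U.card : ℝ) - (S2.card : ℝ))) :=
        mul_pos hε (mul_pos (sub_pos.mpr hc1R) (sub_pos.mpr hc2R))
      linarith
    exact absurd (hwmax hzK') (not_le.mpr hgz)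
end

section
/- Along the suffix of a safe path after the meeting point, the traveled distance is bounded by a telescoping argument: let P be a directed path with vertices m = v_0, v_1, …, v_k = v, and suppose there are functions t_S, t_R : {v_0,…,v_k} → ℝ (arrival times of a set S and of all terminals) with t_S(v_0) = t_R(v_0), such that each edge e_i = (v_{i-1}, v_i) satisfies c(e_i) ≤ (t_S(v_i) − t_S(v_{i-1})) + max{t_R(v_i) − t_R(v_{i-1}), 0} and c(e_i) ≥ |t_R(v_i) − t_R(v_{i-1})|. Then the total length satisfies c(P) ≤ 2·t_S(v) + t_R(v) − 3·t_S(m). -/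
lemma fin_telescope {k : ℕ} (f : Fin (k + 1) → ℝ) :
    ∑ i : Fin k, (f i.succ - f i.castSucc) = f (Fin.last k) - f 0 := by
  induction k with
  | zero => simp
  | succ n ih =>
    rw [Fin.sum_univ_castSucc]
    have := ih (fun i => f i.castSucc)
    simp only [Fin.succ_castSucc] at this ⊢
    rw [this]
    simp [Fin.succ_last]

/-- Telescoping bound along the suffix of a safe path after the
meeting point: for vertices `m = v_0, v_1, …, v_k = v` with arrival-time functions
`tS, tR` satisfying `tS(m) = tR(m)`, and edge lengths `c` with
`c(e_i) ≤ ΔtS + max(ΔtR, 0)` and `|ΔtR| ≤ c(e_i)` on each edge, the total length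
satisfies `c(P) ≤ 2·tS(v) + tR(v) - 3·tS(m)`. -/
theorem safe_path_telescoping {k : ℕ}
    (tS tR : Fin (k + 1) → ℝ) (c : Fin k → ℝ)
    (hc : ∀ i, 0 ≤ c i)
    (h0 : tS 0 = tR 0)
    (hub : ∀ i : Fin k,
      c i ≤ (tS i.succ - tS i.castSucc) + max (tR i.succ - tR i.castSucc) 0)
    (hlb : ∀ i : Fin k, |tR i.succ - tR i.castSucc| ≤ c i) :
    ∑ i : Fin k, c i ≤ 2 * tS (Fin.last k) + tR (Fin.last k) - 3 * tS 0 := by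
  have key : ∀ i : Fin k,
      c i ≤ 2 * (tS i.succ - tS i.castSucc) + (tR i.succ - tR i.castSucc) := by
    intro i
    have h1 := hub i
    have h2 := abs_le.mp (hlb i)
    rcases le_total (tR i.succ - tR i.castSucc) 0 with h | h
    · rw [max_eq_right h] at h1; linarith [h2.1]
    · rw [max_eq_left h] at h1; linarith [h2.2]
  calc ∑ i : Fin k, c i
      ≤ ∑ i : Fin k, (2 * (tS i.succ - tS i.castSucc) + (tR i.succ - tR i.castSucc)) :=
        Finset.sum_le_sum fun i _ => key i
    _ = 2 * (tS (Fin.last k) - tS 0) + (tR (Fin.last k) - tR 0) := by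
        rw [Finset.sum_add_distrib, ← Finset.mul_sum, fin_telescope tS, fin_telescope tR]
    _ = 2 * tS (Fin.last k) + tR (Fin.last k) - 3 * tS 0 := by rw [← h0]; ring
end

section
/- For the functions a(γ) = (7−5γ)/12 and b(γ) = (7−5γ)(3−7γ)/(12(9−7γ)) on [0, 1/5], one has ∫_0^{1/5} a(γ)/b(γ) dγ = ∫_0^{1/5} (9−7γ)/(3−7γ) dγ < 1, ∫_0^{1/5} 1/b(γ) dγ < ∞, and 2·(1 − ∫_0^{1/5} (a(γ) − 1/2)/b(γ) dγ) ≤ 1.898. -/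
set_option maxRecDepth 8000

/-- `a(γ) = (7 - 5γ)/12`. -/
noncomputable def aFun (γ : ℝ) : ℝ := (7 - 5 * γ) / 12

/-- `b(γ) = (7 - 5γ)(3 - 7γ)/(12(9 - 7γ))`. -/
noncomputable def bFun (γ : ℝ) : ℝ := (7 - 5 * γ) * (3 - 7 * γ) / (12 * (9 - 7 * γ))

lemma log76_le : Real.log (7 / 6) ≤ 0.1545 := by
  rw [Real.log_le_iff_le_exp (by norm_num)]
  have h1 : (1 : ℝ) + 0.1545 / 40 ≤ Real.exp (0.1545 / 40) := by
    have := Real.add_one_le_exp ((0.1545 : ℝ) / 40)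
    linarith
  have h2 : ((1 : ℝ) + 0.1545 / 40) ^ (40 : ℕ) ≤ (Real.exp (0.1545 / 40)) ^ (40 : ℕ) :=
    pow_le_pow_left₀ (by norm_num) h1 40
  have h3 : (Real.exp (0.1545 / 40)) ^ (40 : ℕ) = Real.exp 0.1545 := by
    rw [← Real.exp_nat_mul]; norm_num
  have h4 : ((7 : ℝ) / 6) ≤ ((1 : ℝ) + 0.1545 / 40) ^ (40 : ℕ) := by norm_num
  linarith [h3 ▸ h2]

lemma log1615_ge : (0.0645 : ℝ) ≤ Real.log (16 / 15) := by
  rw [Real.le_log_iff_exp_le (by norm_num)]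
  have h1 : (1 : ℝ) - 0.0645 / 80 ≤ Real.exp (-(0.0645 / 80)) := by
    have := Real.add_one_le_exp (-((0.0645 : ℝ) / 80))
    linarith
  have h2 : ((1 : ℝ) - 0.0645 / 80) ^ (80 : ℕ) ≤ (Real.exp (-(0.0645 / 80))) ^ (80 : ℕ) :=
    pow_le_pow_left₀ (by norm_num) h1 80
  have h3 : (Real.exp (-(0.0645 / 80))) ^ (80 : ℕ) = Real.exp (-(0.0645 : ℝ)) := by
    rw [← Real.exp_nat_mul]; norm_num
  have h4 : ((15 : ℝ) / 16) ≤ ((1 : ℝ) - 0.0645 / 80) ^ (80 : ℕ) := by norm_num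
  have h5 : ((15 : ℝ) / 16) ≤ Real.exp (-(0.0645 : ℝ)) := by linarith [h3 ▸ h2]
  rw [Real.exp_neg] at h5
  have hp : (0 : ℝ) < Real.exp 0.0645 := Real.exp_pos _
  have h6 := mul_le_mul_of_nonneg_left h5 hp.le
  rw [mul_inv_cancel₀ hp.ne'] at h6
  nlinarith

/-- The integrals arising in the `1.898` integrality-gap computation:
`∫_0^{1/5} a/b dγ = ∫_0^{1/5} (9-7γ)/(3-7γ) dγ < 1`, the function `1/b` is integrable on
`[0, 1/5]`, and `2·(1 - ∫_0^{1/5} (a - 1/2)/b dγ) ≤ 1.898`. -/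
theorem integrality_gap_integrals :
    (∫ γ in (0 : ℝ)..(1 / 5), aFun γ / bFun γ) =
      (∫ γ in (0 : ℝ)..(1 / 5), (9 - 7 * γ) / (3 - 7 * γ)) ∧
    (∫ γ in (0 : ℝ)..(1 / 5), (9 - 7 * γ) / (3 - 7 * γ)) < 1 ∧
    IntervalIntegrable (fun γ => 1 / bFun γ) MeasureTheory.volume 0 (1 / 5) ∧
    2 * (1 - ∫ γ in (0 : ℝ)..(1 / 5), (aFun γ - 1 / 2) / bFun γ) ≤ 1.898 := by
  have huIcc : Set.uIcc (0 : ℝ) (1 / 5) = Set.Icc 0 (1 / 5) := Set.uIcc_of_le (by norm_num)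
  have hne : ∀ γ ∈ Set.Icc (0 : ℝ) (1 / 5),
      (7 - 5 * γ ≠ 0) ∧ (3 - 7 * γ ≠ 0) ∧ (9 - 7 * γ ≠ 0) := by
    intro γ ⟨h0, h1⟩
    refine ⟨by nlinarith, by nlinarith, by nlinarith⟩
  -- Part 1
  have part1 : (∫ γ in (0 : ℝ)..(1 / 5), aFun γ / bFun γ) =
      (∫ γ in (0 : ℝ)..(1 / 5), (9 - 7 * γ) / (3 - 7 * γ)) := by
    apply intervalIntegral.integral_congr
    intro γ hγ
    rw [huIcc] at hγ
    obtain ⟨h7, h3, h9⟩ := hne γ hγ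
    simp only [aFun, bFun]
    rw [div_div_div_eq]
    field_simp [h7, h3, h9]
  have hcont2 : ContinuousOn (fun γ : ℝ => (9 - 7 * γ) / (3 - 7 * γ))
      (Set.uIcc (0 : ℝ) (1 / 5)) := by
    apply ContinuousOn.div (by fun_prop) (by fun_prop)
    intro γ hγ; rw [huIcc] at hγ; exact (hne γ hγ).2.1
  -- Part 2
  have part2 : (∫ γ in (0 : ℝ)..(1 / 5), (9 - 7 * γ) / (3 - 7 * γ)) < 1 := by
    have hmono : (∫ γ in (0 : ℝ)..(1 / 5), (9 - 7 * γ) / (3 - 7 * γ)) ≤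
        ∫ _ in (0 : ℝ)..(1 / 5), (19 : ℝ) / 4 := by
      apply intervalIntegral.integral_mono_on (by norm_num)
        (hcont2.intervalIntegrable) intervalIntegrable_const
      intro γ hγ
      obtain ⟨h0, h1⟩ := hγ
      have h3 : (0 : ℝ) < 3 - 7 * γ := by nlinarith
      rw [div_le_div_iff₀ h3 (by norm_num)]
      nlinarith
    have hconst : (∫ _ in (0 : ℝ)..(1 / 5), (19 : ℝ) / 4) = 19 / 20 := by
      rw [intervalIntegral.integral_const]
      norm_num
    linarith
  -- Part 3
  have part3 : IntervalIntegrable (fun γ => 1 / bFun γ) MeasureTheory.volume 0 (1 / 5) := by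
    apply ContinuousOn.intervalIntegrable
    apply ContinuousOn.div continuousOn_const
    · show ContinuousOn (fun γ : ℝ => (7 - 5 * γ) * (3 - 7 * γ) / (12 * (9 - 7 * γ)))
        (Set.uIcc (0 : ℝ) (1 / 5))
      apply ContinuousOn.div (by fun_prop) (by fun_prop)
      intro γ hγ; rw [huIcc] at hγ
      obtain ⟨h7, h3, h9⟩ := hne γ hγ
      intro h; exact h9 (by linarith [mul_eq_zero.mp (by linarith : (12 : ℝ) * (9 - 7 * γ) = 0)])
    · intro γ hγ; rw [huIcc] at hγ
      obtain ⟨h7, h3, h9⟩ := hne γ hγ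
      simp only [bFun]
      intro h
      rcases div_eq_zero_iff.mp h with h' | h'
      · rcases mul_eq_zero.mp h' with h'' | h'' <;> [exact h7 h''; exact h3 h'']
      · rcases mul_eq_zero.mp h' with h'' | h'' <;> [norm_num at h''; exact h9 h'']
  -- Part 4
  have part4 : 2 * (1 - ∫ γ in (0 : ℝ)..(1 / 5), (aFun γ - 1 / 2) / bFun γ) ≤ 1.898 := by
    set g : ℝ → ℝ := fun γ => 1 - (12 / 17) / (7 - 5 * γ) - (24 / 17) / (3 - 7 * γ) with hg
    have hcong : (∫ γ in (0 : ℝ)..(1 / 5), (aFun γ - 1 / 2) / bFun γ) =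
        ∫ γ in (0 : ℝ)..(1 / 5), g γ := by
      apply intervalIntegral.integral_congr
      intro γ hγ; rw [huIcc] at hγ
      obtain ⟨h7, h3, h9⟩ := hne γ hγ
      simp only [aFun, bFun, hg]
      field_simp [h7, h3, h9]
      ring
    have hgcont : ContinuousOn g (Set.uIcc (0 : ℝ) (1 / 5)) := by
      apply ContinuousOn.sub
      apply ContinuousOn.sub continuousOn_const
      · apply ContinuousOn.div continuousOn_const (by fun_prop)
        intro γ hγ; rw [huIcc] at hγ; exact (hne γ hγ).1
      · apply ContinuousOn.div continuousOn_const (by fun_prop)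
        intro γ hγ; rw [huIcc] at hγ; exact (hne γ hγ).2.1
    set F : ℝ → ℝ := fun γ => γ + (12 / 85) * Real.log (7 - 5 * γ)
        + (24 / 119) * Real.log (3 - 7 * γ) with hF
    have hftc : (∫ γ in (0 : ℝ)..(1 / 5), g γ) = F (1 / 5) - F 0 := by
      apply intervalIntegral.integral_eq_sub_of_hasDerivAt
      · intro γ hγ; rw [huIcc] at hγ
        obtain ⟨h7, h3, h9⟩ := hne γ hγ
        have d1 : HasDerivAt (fun y : ℝ => 7 - 5 * y) (-5) γ := by
          simpa using ((hasDerivAt_id γ).const_mul (5 : ℝ)).const_sub 7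
        have d2 : HasDerivAt (fun y : ℝ => 3 - 7 * y) (-7) γ := by
          simpa using ((hasDerivAt_id γ).const_mul (7 : ℝ)).const_sub 3
        have dl1 := (d1.log h7).const_mul ((12 : ℝ) / 85)
        have dl2 := (d2.log h3).const_mul ((24 : ℝ) / 119)
        have hsum := ((hasDerivAt_id γ).add dl1).add dl2
        have hdv : (1 : ℝ) + 12 / 85 * (-5 / (7 - 5 * γ)) + 24 / 119 * (-7 / (3 - 7 * γ))
            = g γ := by
          rw [hg]
          field_simp [h7, h3]
          ring
        simpa [hF, hdv, Pi.add_def] using hsum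
      · exact hgcont.intervalIntegrable
    have e1 : 7 - 5 * ((1 : ℝ) / 5) = 6 := by norm_num
    have e2 : 3 - 7 * ((1 : ℝ) / 5) = 8 / 5 := by norm_num
    have e3 : 7 - 5 * (0 : ℝ) = 7 := by norm_num
    have e4 : 3 - 7 * (0 : ℝ) = 3 := by norm_num
    have hval : F (1 / 5) - F 0 = 1 / 5 + (12 / 85) * (Real.log 6 - Real.log 7)
        + (24 / 119) * (Real.log (8 / 5) - Real.log 3) := by
      simp only [hF, e1, e2, e3, e4]
      ring
    have hL1 : Real.log 7 - Real.log 6 ≤ 0.1545 := by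
      have h := log76_le
      rw [Real.log_div (by norm_num) (by norm_num)] at h
      linarith
    have hL2 : Real.log 3 - Real.log (8 / 5) ≤ 0.6931471808 - 0.0645 := by
      have h158 : Real.log 3 - Real.log (8 / 5) = Real.log 2 - Real.log (16 / 15) := by
        rw [show ((8 : ℝ) / 5) = 3 * (16 / 15) / 2 by norm_num,
          Real.log_div (by norm_num) (by norm_num), Real.log_mul (by norm_num) (by norm_num)]
        ring
      have hlog2 := Real.log_two_lt_d9
      have hlog1615 := log1615_ge
      rw [h158]
      linarith
    rw [hcong, hftc, hval]
    have hfinal : (1 : ℝ) / 5 + 12 / 85 * (Real.log 6 - Real.log 7)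
        + 24 / 119 * (Real.log (8 / 5) - Real.log 3) ≥ 0.051 := by nlinarith [hL1, hL2]
    norm_num at hfinal ⊢
    linarith
  exact ⟨part1, part2, part3, part4⟩
end
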